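/- arXiv:1609.09770 — 5 statements merged into one kernel-verified Lean document; each statement's English description precedes it below -/
import Mathlib

section
/- (Siegel's linear independence criterion.) Let θ₁,…,θ_p be real numbers, not all zero. Let τ > 0, and (Q_n) a sequence of real numbers with limit +∞. Let 𝒩 be an infinite subset of ℕ, and for each n ∈ 𝒩 let L^{(n)} = [ℓ^{(n)}_{i,j}]_{1≤i,j≤p} be a p×p matrix with integer entries and non-zero determinant such that, as n → ∞ in 𝒩: max_{1≤i,j≤p} |ℓ^{(n)}_{i,j}| ≤ Q_n^{1+o(1)} and max_{1≤j≤p} |ℓ^{(n)}_{1,j} θ₁ + … + ℓ^{(n)}_{p,j} θ_p| ≤ Q_n^{−τ+o(1)} (i.e. for every ε > 0, for all sufficiently large n ∈ 𝒩, the first maximum is ≤ Q_n^{1+ε} and the second is ≤ Q_n^{−τ+ε}). Then dim_ℚ Span_ℚ(θ₁,…,θ_p) ≥ τ + 1. -/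
open Filter Matrix

lemma aux_exists_rows_det_ne_zero {K : Type} [Field K] {p r : ℕ}
    (M : Matrix (Fin p) (Fin r) K)
    (h : Submodule.span K (Set.range M) = ⊤) :
    ∃ g : Fin r → Fin p, ((M.submatrix g id).det ≠ 0) := by
  obtain ⟨t, hts, hsp, hli⟩ := exists_linearIndependent K (Set.range M)
  rw [h] at hsp
  have htfin : t.Finite := hli.setFinite
  haveI : Fintype t := htfin.fintype
  have hcard : Fintype.card t = r := by
    have h1 := finrank_span_set_eq_card (s := t) hli
    rw [hsp] at h1
    simpa [Module.finrank_pi] using h1.symm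
  let e : Fin r ≃ t := (Fintype.equivFinOfCardEq hcard).symm
  have hchoice : ∀ m : Fin r, ∃ j : Fin p, M j = (e m : Fin r → K) := fun m => hts (e m).2
  choose g hg using hchoice
  refine ⟨g, ?_⟩
  have hrows : LinearIndependent K (fun m => (M.submatrix g id) m) := by
    have : (fun m => (M.submatrix g id) m) = (fun x : t => (x : Fin r → K)) ∘ e := by
      funext m; ext k; simp [Matrix.submatrix, hg m]
    rw [this]
    exact hli.comp e e.injective
  have := Matrix.linearIndependent_rows_iff_isUnit.mp hrows
  exact fun h0 => (Matrix.isUnit_iff_isUnit_det _ |>.mp this).ne_zero h0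

lemma aux_det_bound {r : ℕ} (C : Matrix (Fin r) (Fin r) ℝ) (k₀ : Fin r) (s t : ℝ)
    (hs : 0 ≤ s) (h0 : ∀ m, |C k₀ m| ≤ s) (h1 : ∀ k m, k ≠ k₀ → |C k m| ≤ t) :
    |C.det| ≤ (r.factorial : ℝ) * (s * t ^ (r - 1)) := by
  rw [Matrix.det_apply]
  refine (Finset.abs_sum_le_sum_abs _ _).trans ?_
  have hbound : ∀ σ ∈ Finset.univ (α := Equiv.Perm (Fin r)),
      |Equiv.Perm.sign σ • ∏ i, C (σ i) i| ≤ s * t ^ (r - 1) := by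
    intro σ _
    have habs : |Equiv.Perm.sign σ • ∏ i, C (σ i) i| = |∏ i, C (σ i) i| := by
      rcases Int.units_eq_one_or (Equiv.Perm.sign σ) with h | h <;> simp [h]
    rw [habs, Finset.abs_prod]
    set i₀ : Fin r := σ.symm k₀ with hi₀
    have hmem : i₀ ∈ Finset.univ := Finset.mem_univ _
    rw [← Finset.mul_prod_erase _ _ hmem]
    have hcard : (Finset.univ.erase i₀).card = r - 1 := by
      simp [Finset.card_erase_of_mem hmem]
    have h2 : ∏ i ∈ Finset.univ.erase i₀, |C (σ i) i| ≤ t ^ (r - 1) := by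
      calc ∏ i ∈ Finset.univ.erase i₀, |C (σ i) i| ≤ ∏ _i ∈ Finset.univ.erase i₀, t :=
              Finset.prod_le_prod (fun i _ => abs_nonneg _) (fun i hi => by
                refine h1 _ _ fun hσ => (Finset.mem_erase.mp hi).1 ?_
                rw [hi₀, ← hσ, Equiv.symm_apply_apply])
        _ = t ^ (r - 1) := by rw [Finset.prod_const, hcard]
    have h3 : |C (σ i₀) i₀| ≤ s := by
      have : σ i₀ = k₀ := by simp [hi₀]
      rw [this]; exact h0 _
    exact mul_le_mul h3 h2 (Finset.prod_nonneg fun i _ => abs_nonneg _) hs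
  refine (Finset.sum_le_sum hbound).trans ?_
  simp [Finset.card_univ, Fintype.card_perm]

/-- **Siegel's linear independence criterion.**
Let `θ₁, …, θ_p` be real numbers, not all zero, `τ > 0`, and `(Q_n)` a sequence of reals
tending to `+∞`. Suppose that for every `n` in an infinite set `𝒩 ⊆ ℕ` we are given a
`p × p` integer matrix `L n` with non-zero determinant such that, as `n → ∞` in `𝒩`,
`max_{i,j} |(L n)_{i,j}| ≤ Q_n^{1+o(1)}` and
`max_j |∑_i (L n)_{i,j} θ_i| ≤ Q_n^{-τ+o(1)}`.
Then `dim_ℚ Span_ℚ(θ₁,…,θ_p) ≥ τ + 1`. -/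
theorem siegel_linear_independence_criterion
    (p : ℕ) (hp : 0 < p) (θ : Fin p → ℝ) (hθ : θ ≠ 0)
    (τ : ℝ) (hτ : 0 < τ)
    (Q : ℕ → ℝ) (hQ : Tendsto Q atTop atTop)
    (𝒩 : Set ℕ) (h𝒩 : 𝒩.Infinite)
    (L : ℕ → Matrix (Fin p) (Fin p) ℤ)
    (hdet : ∀ n ∈ 𝒩, (L n).det ≠ 0)
    (hsize : ∀ ε : ℝ, 0 < ε → ∀ᶠ n in atTop ⊓ Filter.principal 𝒩,
      ∀ i j : Fin p, (|L n i j| : ℝ) ≤ (Q n) ^ ((1 : ℝ) + ε))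
    (hlin : ∀ ε : ℝ, 0 < ε → ∀ᶠ n in atTop ⊓ Filter.principal 𝒩,
      ∀ j : Fin p, |∑ i : Fin p, (L n i j : ℝ) * θ i| ≤ (Q n) ^ (-τ + ε)) :
    τ + 1 ≤ (Module.finrank ℚ (Submodule.span ℚ (Set.range θ)) : ℝ) := by
  classical
  by_contra hcon
  push_neg at hcon
  haveI hlne : (atTop ⊓ Filter.principal 𝒩).NeBot := by
    rw [Filter.inf_principal_neBot_iff]
    intro U hU
    obtain ⟨a, ha⟩ := mem_atTop_sets.mp hU
    obtain ⟨b, hb, hab⟩ := h𝒩.exists_gt a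
    exact ⟨b, ha b hab.le, hb⟩
  set V := Submodule.span ℚ (Set.range θ) with hV
  haveI : FiniteDimensional ℚ V := FiniteDimensional.span_of_finite ℚ (Set.finite_range θ)
  set r := Module.finrank ℚ V with hrdef
  have hmem : ∀ i, θ i ∈ V := fun i => Submodule.subset_span (Set.mem_range_self i)
  have hr : 0 < r := by
    obtain ⟨i, hi⟩ : ∃ i, θ i ≠ 0 := by
      by_contra h; push_neg at h; exact hθ (funext h)
    have hne : (⟨θ i, hmem i⟩ : V) ≠ 0 := fun h => hi (congrArg Subtype.val h)
    haveI : Nontrivial V := nontrivial_of_ne _ _ hne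
    exact Module.finrank_pos
  let ψ : Module.Basis (Fin r) ℚ V := Module.finBasis ℚ V
  let ψr : Fin r → ℝ := fun k => ((ψ k : V) : ℝ)
  let c : Fin p → Fin r → ℚ := fun i k => ψ.repr ⟨θ i, hmem i⟩ k
  -- clear denominators
  obtain ⟨d, a, hd, ha⟩ : ∃ (d : ℕ) (a : Fin p → Fin r → ℤ),
      0 < d ∧ ∀ i k, ((a i k : ℚ)) = (d : ℚ) * c i k := by
    refine ⟨∏ i, ∏ k, (c i k).den,
      fun i k => (c i k).num * ((∏ i, ∏ k, (c i k).den) / (c i k).den : ℕ), ?_, ?_⟩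
    · exact Finset.prod_pos fun i _ => Finset.prod_pos fun k _ => (c i k).pos
    · intro i k
      have hdvd : (c i k).den ∣ ∏ i, ∏ k, (c i k).den :=
        dvd_trans (Finset.dvd_prod_of_mem (fun k => (c i k).den) (Finset.mem_univ k))
          (Finset.dvd_prod_of_mem (fun i => ∏ k, (c i k).den) (Finset.mem_univ i))
      obtain ⟨m, hm⟩ := hdvd
      simp only [hm, Nat.mul_div_cancel_left _ (c i k).pos]
      push_cast
      have hden : ((c i k).den : ℚ) ≠ 0 := Nat.cast_ne_zero.mpr (c i k).den_nz
      have hq : ((c i k).den : ℚ) * c i k = (c i k).num := by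
        nth_rewrite 2 [← Rat.num_div_den (c i k)]
        field_simp
      calc ((c i k).num : ℚ) * m = (((c i k).den : ℚ) * c i k) * m := by rw [hq]
        _ = ((c i k).den : ℚ) * m * c i k := by ring
  -- key identity over ℝ
  have key1 : ∀ i, (d : ℝ) * θ i = ∑ k, (a i k : ℝ) * ψr k := by
    intro i
    have h1 : ((d : ℚ) • (⟨θ i, hmem i⟩ : V) : V) = ∑ k, (a i k : ℚ) • ψ k := by
      rw [← ψ.sum_repr ⟨θ i, hmem i⟩, Finset.smul_sum]
      simp_rw [smul_smul, ha]
      rfl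
    have h2 := congrArg (Subtype.val : V → ℝ) h1
    push_cast at h2 ⊢
    simpa [Rat.smul_def, ψr] using h2
  -- linear independence of the columns of a
  have hAcols : ∀ w : Fin r → ℚ, (∀ i, ∑ k, w k * (a i k : ℚ) = 0) → w = 0 := by
    intro w hw
    let φ : V →ₗ[ℚ] ℚ := ∑ k, w k • (ψ.coord k)
    have hφθ : ∀ i, φ ⟨θ i, hmem i⟩ = 0 := by
      intro i
      have h1 : ∑ k, w k * (a i k : ℚ) = (d : ℚ) * ∑ k, w k * c i k := by
        rw [Finset.mul_sum]
        refine Finset.sum_congr rfl fun k _ => ?_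
        rw [ha]; ring
      have h2 : (∑ k, w k * c i k) = 0 := by
        have hd0 : (d : ℚ) ≠ 0 := Nat.cast_ne_zero.mpr hd.ne'
        have h3 := hw i
        rw [h1] at h3
        exact (mul_eq_zero.mp h3).resolve_left hd0
      simpa [φ, LinearMap.sum_apply, Module.Basis.coord_apply] using h2
    have hφ0 : ∀ v : V, φ v = 0 := by
      intro v
      have hv2 : (v : ℝ) ∈ Submodule.span ℚ (Set.range θ) := v.2
      obtain ⟨f, hf⟩ := (Submodule.mem_span_range_iff_exists_fun ℚ).mp hv2
      have hv : v = ∑ i, f i • (⟨θ i, hmem i⟩ : V) := by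
        apply Subtype.ext
        push_cast
        simpa [Rat.smul_def] using hf.symm
      rw [hv, map_sum]
      simp only [_root_.map_smul, hφθ, smul_zero, Finset.sum_const_zero]
    funext k
    have h4 := hφ0 (ψ k)
    simpa [φ, LinearMap.sum_apply, Module.Basis.coord_apply, Module.Basis.repr_self,
      Finsupp.single_apply] using h4
  -- the integer matrices B n
  set Bz : ℕ → Matrix (Fin p) (Fin r) ℤ := fun n => fun j k => ∑ i, L n i j * a i k with hBz
  have claim3 : ∀ n ∈ 𝒩, ∃ g : Fin r → Fin p, ((Bz n).submatrix g id).det ≠ 0 := by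
    intro n hn
    set M : Matrix (Fin p) (Fin r) ℚ := (Bz n).map (Int.cast : ℤ → ℚ) with hM
    have hLdet : ((L n).map (Int.cast : ℤ → ℚ)).det = (((L n).det : ℤ) : ℚ) :=
      ((Int.castRingHom ℚ).map_det (L n)).symm
    have hLunit : IsUnit ((L n).map (Int.cast : ℤ → ℚ)) := by
      rw [Matrix.isUnit_iff_isUnit_det, hLdet]
      exact (Int.cast_ne_zero.mpr (hdet n hn)).isUnit
    have hcols : LinearIndependent ℚ (fun k => Mᵀ k) := by
      rw [Fintype.linearIndependent_iff]
      intro w hw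
      have hvec : Matrix.vecMul (fun i => ∑ k, w k * (a i k : ℚ))
          ((L n).map (Int.cast : ℤ → ℚ)) = 0 := by
        funext j
        have h5 := congrFun hw j
        simp only [Finset.sum_apply, Pi.smul_apply, smul_eq_mul, Pi.zero_apply,
          Matrix.transpose_apply] at h5
        simp only [Matrix.vecMul, dotProduct, Matrix.map_apply, Pi.zero_apply]
        rw [← h5]
        have h6 : ∀ k, w k * M j k = ∑ i, w k * ((L n i j : ℚ) * (a i k : ℚ)) := by
          intro k
          rw [← Finset.mul_sum]
          congr 1
          simp only [hM, Matrix.map_apply, hBz]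
          show ((∑ i, L n i j * a i k : ℤ) : ℚ) = _
          exact (Int.cast_sum _ _).trans (Finset.sum_congr rfl fun i _ => Int.cast_mul _ _)
        simp_rw [h6]
        rw [Finset.sum_comm]
        refine Finset.sum_congr rfl fun i _ => ?_
        rw [Finset.sum_mul]
        refine Finset.sum_congr rfl fun k _ => ?_
        ring
      have hinj := Matrix.vecMul_injective_iff_isUnit.mpr hLunit
      have hu : (fun i => ∑ k, w k * (a i k : ℚ)) = 0 := by
        apply hinj
        exact hvec.trans (Matrix.zero_vecMul _).symm
      have hw0 := hAcols w (fun i => congrFun hu i)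
      exact fun k => congrFun hw0 k
    have hspan : Submodule.span ℚ (Set.range M) = ⊤ := by
      have h1 : M.rank = r := by
        rw [Matrix.rank_eq_finrank_span_cols, show M.col = fun k => Mᵀ k from rfl, finrank_span_eq_card hcols]
        simp
      have h2 := Matrix.rank_eq_finrank_span_row M
      rw [h1] at h2
      apply Submodule.eq_top_of_finrank_eq
      rw [show Module.finrank ℚ (Submodule.span ℚ (Set.range M)) = r from h2.symm]
      simp [Module.finrank_pi]
    obtain ⟨g, hg⟩ := aux_exists_rows_det_ne_zero M hspan
    refine ⟨g, fun h0 => hg ?_⟩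
    have heq2 : (M.submatrix g id).det = ((((Bz n).submatrix g id).det : ℤ) : ℚ) :=
      ((Int.castRingHom ℚ).map_det _).symm
    rw [heq2, h0]
    simp
  -- setup of constants
  set k₀ : Fin r := ⟨0, hr⟩ with hk₀
  have hψpos : 0 < |ψr k₀| := by
    refine abs_pos.mpr ?_
    simpa [ψr, Submodule.coe_eq_zero] using ψ.ne_zero k₀
  set ε := (τ + 1 - r) / (2 * r) with hεdef
  have hε : 0 < ε := div_pos (by linarith) (by positivity)
  set A₀ : ℝ := 1 + ∑ i, ∑ k, |(a i k : ℝ)| with hA₀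
  have hA₀pos : 0 < A₀ := by
    have : (0:ℝ) ≤ ∑ i, ∑ k, |(a i k : ℝ)| :=
      Finset.sum_nonneg fun i _ => Finset.sum_nonneg fun k _ => abs_nonneg _
    linarith
  have haA : ∀ i k, |(a i k : ℝ)| ≤ A₀ := by
    intro i k
    have h1 : |(a i k : ℝ)| ≤ ∑ k, |(a i k : ℝ)| :=
      Finset.single_le_sum (f := fun k => |(a i k : ℝ)|) (fun k _ => abs_nonneg _)
        (Finset.mem_univ k)
    have h2 : (∑ k, |(a i k : ℝ)|) ≤ ∑ i, ∑ k, |(a i k : ℝ)| :=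
      Finset.single_le_sum (f := fun i => ∑ k, |(a i k : ℝ)|)
        (fun i _ => Finset.sum_nonneg fun k _ => abs_nonneg _) (Finset.mem_univ i)
    rw [hA₀]; linarith
  set e : ℝ := (-τ + ε) + (1 + ε) * ((r : ℝ) - 1) with hedef
  have he : e < 0 := by
    have hr1 : (1:ℝ) ≤ r := by exact_mod_cast hr
    have hrε : (r:ℝ) * ε = (τ + 1 - r) / 2 := by
      rw [hεdef]
      field_simp
    have he2 : e = ((r:ℝ) - 1 - τ) + (r:ℝ) * ε := by rw [hedef]; ring
    rw [he2, hrε]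
    linarith
  set Cst : ℝ := (r.factorial : ℝ) * ((d:ℝ) * ((p:ℝ) * A₀) ^ (r - 1)) with hCst
  have hCstpos : 0 < Cst := by
    have h1 : (0:ℝ) < (p:ℝ) * A₀ := by positivity
    have h2 : (0:ℝ) < r.factorial := by exact_mod_cast r.factorial_pos
    have h3 : (0:ℝ) < d := by exact_mod_cast hd
    positivity
  -- the eventual bound
  have E : ∀ᶠ n in atTop ⊓ Filter.principal 𝒩, |ψr k₀| ≤ Cst * Q n ^ e := by
    have hQev : ∀ᶠ n in atTop ⊓ Filter.principal 𝒩, 1 ≤ Q n :=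
      (hQ.mono_left inf_le_left).eventually_ge_atTop 1
    have hmem𝒩 : ∀ᶠ n in atTop ⊓ Filter.principal 𝒩, n ∈ 𝒩 :=
      eventually_inf_principal.mpr (Eventually.of_forall fun n hn => hn)
    filter_upwards [hsize ε hε, hlin ε hε, hQev, hmem𝒩] with n hs hl hQ1 hn
    have hQpos : (0:ℝ) < Q n := lt_of_lt_of_le one_pos hQ1
    obtain ⟨g, hg⟩ := claim3 n hn
    set Bm : Matrix (Fin r) (Fin r) ℝ := fun k m => ((Bz n) (g m) k : ℝ) with hBm
    have hdet1 : 1 ≤ |Bm.det| := by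
      have h1 : Bm = (((Bz n).submatrix g id).map (Int.cast : ℤ → ℝ))ᵀ := rfl
      have h2 : (((Bz n).submatrix g id).map (Int.cast : ℤ → ℝ)).det
          = ((((Bz n).submatrix g id).det : ℤ) : ℝ) :=
        ((Int.castRingHom ℝ).map_det _).symm
      rw [h1, Matrix.det_transpose, h2, ← Int.cast_abs]
      exact_mod_cast Int.one_le_abs hg
    have key2 : (∑ k, ψr k • Bm k) = fun m => (d:ℝ) * (∑ i, (L n i (g m) : ℝ) * θ i) := by
      funext m
      simp only [Finset.sum_apply, Pi.smul_apply, smul_eq_mul]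
      have h3 : (d:ℝ) * (∑ i, (L n i (g m) : ℝ) * θ i)
          = ∑ i, (L n i (g m) : ℝ) * ((d:ℝ) * θ i) := by
        rw [Finset.mul_sum]
        exact Finset.sum_congr rfl fun i _ => by ring
      rw [h3]
      have h4 : ∀ k, Bm k m = ∑ i, (L n i (g m) : ℝ) * (a i k : ℝ) := by
        intro k
        rw [hBm]
        simp only [hBz]
        push_cast
        rfl
      calc ∑ k, ψr k * Bm k m
          = ∑ k, ∑ i, (L n i (g m) : ℝ) * ((a i k : ℝ) * ψr k) := by
            refine Finset.sum_congr rfl fun k _ => ?_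
            rw [h4 k, Finset.mul_sum]
            exact Finset.sum_congr rfl fun i _ => by ring
        _ = ∑ i, ∑ k, (L n i (g m) : ℝ) * ((a i k : ℝ) * ψr k) := Finset.sum_comm
        _ = ∑ i, (L n i (g m) : ℝ) * ((d:ℝ) * θ i) := by
            refine Finset.sum_congr rfl fun i _ => ?_
            rw [← Finset.mul_sum, ← key1 i]
    have h4' : ∀ k m, Bm k m = ∑ i, (L n i (g m) : ℝ) * (a i k : ℝ) := by
      intro k m
      rw [hBm]
      simp only [hBz]
      push_cast
      rfl
    set Cm := Bm.updateRow k₀ (∑ k, ψr k • Bm k) with hCm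
    have hCdet : Cm.det = ψr k₀ * Bm.det := by
      rw [hCm, Matrix.det_updateRow_sum]
      simp [smul_eq_mul]
    have hsmall : ∀ m, |Cm k₀ m| ≤ (d:ℝ) * Q n ^ (-τ + ε) := by
      intro m
      rw [hCm, Matrix.updateRow_self, key2]
      rw [abs_mul, Nat.abs_cast]
      exact mul_le_mul_of_nonneg_left (hl (g m)) (Nat.cast_nonneg d)
    have hbig : ∀ k m, k ≠ k₀ → |Cm k m| ≤ ((p:ℝ) * A₀) * Q n ^ ((1:ℝ) + ε) := by
      intro k m hk
      rw [hCm, Matrix.updateRow_ne hk, h4' k m]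
      refine (Finset.abs_sum_le_sum_abs _ _).trans ?_
      have h5 : ∀ i ∈ Finset.univ, |(L n i (g m) : ℝ) * (a i k : ℝ)|
          ≤ Q n ^ ((1:ℝ)+ε) * A₀ := by
        intro i _
        rw [abs_mul]
        exact mul_le_mul (hs i (g m)) (haA i k) (abs_nonneg _)
          (Real.rpow_nonneg hQpos.le _)
      refine (Finset.sum_le_sum h5).trans ?_
      rw [Finset.sum_const, Finset.card_univ, Fintype.card_fin, nsmul_eq_mul]
      exact le_of_eq (by ring)
    have hsnn : (0:ℝ) ≤ (d:ℝ) * Q n ^ (-τ + ε) := by positivity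
    have hmain := aux_det_bound Cm k₀ _ _ hsnn hsmall hbig
    rw [hCdet, abs_mul] at hmain
    have h5 : |ψr k₀| ≤ |ψr k₀| * |Bm.det| := le_mul_of_one_le_right (abs_nonneg _) hdet1
    have h6 := h5.trans hmain
    have hrw : (r.factorial : ℝ) * ((d:ℝ) * Q n ^ (-τ + ε)
        * (((p:ℝ) * A₀) * Q n ^ ((1:ℝ)+ε)) ^ (r-1)) = Cst * Q n ^ e := by
      rw [mul_pow]
      have h8 : (Q n ^ ((1:ℝ)+ε)) ^ (r-1) = Q n ^ ((1+ε) * ((r:ℝ) - 1)) := by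
        rw [← Real.rpow_natCast (Q n ^ ((1:ℝ)+ε)) (r-1), ← Real.rpow_mul hQpos.le]
        congr 1
        rw [Nat.cast_sub hr]
        push_cast
        ring
      have h9 : Q n ^ (-τ + ε) * Q n ^ ((1 + ε) * ((r:ℝ) - 1)) = Q n ^ e := by
        rw [← Real.rpow_add hQpos, hedef]
      rw [h8, hCst, ← h9]
      ring
    rw [hrw] at h6
    exact h6
  -- conclusion
  have hT : Tendsto (fun n => Cst * Q n ^ e) (atTop ⊓ Filter.principal 𝒩) (nhds 0) := by
    have h1 : Tendsto (fun x : ℝ => x ^ e) atTop (nhds 0) := by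
      have h2 := tendsto_rpow_neg_atTop (y := -e) (by linarith)
      simpa using h2
    have h3 := h1.comp (hQ.mono_left (inf_le_left : atTop ⊓ Filter.principal 𝒩 ≤ atTop))
    have h4 := h3.const_mul Cst
    simpa using h4
  have hlt := hT.eventually_lt_const hψpos
  obtain ⟨n, h1, h2⟩ := (E.and hlt).exists
  linarith
end

section
/- Let N ≥ 1 and ω = e^{2iπ/N}. The functions 1 and Li_j(ω^ℓ z), for integers j ≥ 1 and 1 ≤ ℓ ≤ N, are linearly independent over ℂ(z): if a ≥ 1 and Q(z) + ∑_{j=1}^a ∑_{ℓ=1}^N Q_{j,ℓ}(z) · Li_j(ω^ℓ z) = 0 for all z in some nonempty open subset of the punctured open unit disk, where Q and the Q_{j,ℓ} are rational functions in ℂ(z), then Q = 0 and Q_{j,ℓ} = 0 for all j, ℓ. -/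
open Complex Polynomial Finset Matrix FormalMultilinearSeries

/-- The polylogarithm `Li_j(z) = ∑_{m ≥ 1} z^m / m^j` (the `m = 0` term vanishes
by the convention `1/0 = 0`). -/
noncomputable def polyLi (j : ℕ) (z : ℂ) : ℂ := ∑' m : ℕ, z ^ m / (m : ℂ) ^ j

lemma polyLi_hasSum {j : ℕ} (hj : 1 ≤ j) {w : ℂ} (hw : ‖w‖ < 1) :
    HasSum (fun m : ℕ => w ^ m / (m : ℂ) ^ j) (polyLi j w) := by
  have hsum : Summable (fun m : ℕ => w ^ m / (m : ℂ) ^ j) := by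
    apply Summable.of_norm_bounded (summable_geometric_of_lt_one (norm_nonneg w) hw)
    intro m
    rcases Nat.eq_zero_or_pos m with h | h
    · subst h; simp [zero_pow (by omega : j ≠ 0)]
    · rw [norm_div, norm_pow]
      have h1 : (1:ℝ) ≤ ‖((m:ℂ))^j‖ := by
        rw [norm_pow]
        apply one_le_pow₀
        simpa using (Nat.one_le_cast (α := ℝ)).mpr h
      calc ‖w‖^m / ‖(m:ℂ)^j‖ ≤ ‖w‖^m / 1 := by
            apply div_le_div_of_nonneg_left ?_ ?_ h1 <;> positivity
        _ = ‖w‖^m := by ring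
  exact hsum.hasSum

lemma coeffs_eq_zero_of_vanish {A : ℕ → ℂ} {C : ℝ} (hC : ∀ n, ‖A n‖ ≤ C) {G : ℂ → ℂ}
    (hG : ∀ z ∈ Metric.ball (0:ℂ) 1, HasSum (fun n => A n * z ^ n) (G z))
    {V : Set ℂ} (hVo : IsOpen V) (hVne : V.Nonempty) (hVsub : V ⊆ Metric.ball (0:ℂ) 1)
    (hGV : ∀ z ∈ V, G z = 0) : ∀ n, A n = 0 := by
  set F := ofScalars ℂ A with hF
  have hball : HasFPowerSeriesOnBall G F 0 1 := by
    refine ⟨?_, one_pos, ?_⟩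
    · apply F.le_radius_of_bound C
      intro n
      simp only [hF, ofScalars_norm, NNReal.coe_one, one_pow, mul_one]
      exact hC n
    · intro y hy
      have hy' : y ∈ Metric.ball (0:ℂ) 1 := by
        rw [← ENNReal.coe_one, Metric.emetric_ball_nnreal] at hy; simpa using hy
      have := hG y hy'
      have hcoeff : ∀ n, (fun n => F n fun _ => y) n = A n * y ^ n := fun n => by
        show (ofScalars ℂ A n) (fun _ => y) = A n * y ^ n
        rw [ofScalars_apply_eq, smul_eq_mul]
      simpa only [zero_add, funext hcoeff] using this
  have hAn : AnalyticOnNhd ℂ G (Metric.ball (0:ℂ) 1) := by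
    intro z hz
    exact hball.analyticAt_of_mem (by rw [← ENNReal.coe_one, Metric.emetric_ball_nnreal]; simpa using hz)
  obtain ⟨z₀, hz₀⟩ := hVne
  have heq : Set.EqOn G 0 (Metric.ball (0:ℂ) 1) := by
    apply hAn.eqOn_zero_of_preconnected_of_eventuallyEq_zero
      (convex_ball (0:ℂ) 1).isPreconnected (hVsub hz₀)
    filter_upwards [hVo.mem_nhds hz₀] using hGV
  have h0 : G =ᶠ[nhds (0:ℂ)] 0 := by
    filter_upwards [Metric.ball_mem_nhds (0:ℂ) one_pos] using heq
  have hFzero : F = 0 := (hball.hasFPowerSeriesAt).eq_zero_of_eventually h0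
  intro n
  have := congrFun (congrArg (fun (p : FormalMultilinearSeries ℂ ℂ ℂ) => p) hFzero)
  have hn : F n = 0 := by rw [hFzero]; rfl
  rwa [hF, ofScalars_eq_zero] at hn

lemma hasSum_poly_mul_polyLi (P : Polynomial ℂ) {j : ℕ} (hj : 1 ≤ j) {ξ : ℂ} (hξ : ‖ξ‖ = 1)
    {z : ℂ} (hz : ‖z‖ < 1) {d : ℕ} (hd : P.natDegree < d + 1) :
    HasSum (fun n : ℕ => (∑ k ∈ Finset.range (d+1),
        P.coeff k * ξ ^ (n - k) / ((n - k : ℕ) : ℂ) ^ j) * z ^ n)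
      (P.eval z * polyLi j (ξ * z)) := by
  have hw : ‖ξ * z‖ < 1 := by rw [norm_mul, hξ, one_mul]; exact hz
  have hLi := polyLi_hasSum hj hw
  have hk : ∀ k : ℕ, HasSum (fun n : ℕ => P.coeff k * ξ ^ (n - k) / ((n - k : ℕ) : ℂ) ^ j * z ^ n)
      (P.coeff k * z ^ k * polyLi j (ξ * z)) := by
    intro k
    have h0 := hLi.mul_left (P.coeff k * z ^ k)
    have hinj : Function.Injective (fun m : ℕ => k + m) := fun a b h => by
      simpa using h
    have hgi : (fun n : ℕ => P.coeff k * ξ ^ (n - k) / ((n - k : ℕ) : ℂ) ^ j * z ^ n)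
        ∘ (fun m => k + m)
        = fun m => P.coeff k * z ^ k * ((ξ * z) ^ m / ((m : ℕ) : ℂ) ^ j) := by
      funext m
      simp only [Function.comp]
      have h1 : k + m - k = m := by omega
      rw [h1, mul_pow, pow_add]; ring
    refine (Function.Injective.hasSum_iff hinj ?_).mp ?_
    · intro n hn
      have hnk : n < k := by by_contra h; exact hn ⟨n - k, show k + (n - k) = n by omega⟩
      have h2 : n - k = 0 := Nat.sub_eq_zero_of_le (le_of_lt hnk)
      rw [h2]
      simp [zero_pow (by omega : j ≠ 0)]
    · rw [hgi]; exact h0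
  have htot : HasSum (fun n : ℕ => ∑ k ∈ Finset.range (d+1),
        P.coeff k * ξ ^ (n - k) / ((n - k : ℕ) : ℂ) ^ j * z ^ n)
      (∑ k ∈ Finset.range (d+1), P.coeff k * z ^ k * polyLi j (ξ * z)) :=
    hasSum_sum (fun k _ => hk k)
  convert htot using 1
  · funext n; rw [Finset.sum_mul]
  · rw [← Finset.sum_mul, ← Polynomial.eval_eq_sum_range' hd]

lemma vandermonde_zero {N : ℕ} {ξ : Fin N → ℂ} (hinj : Function.Injective ξ)
    {v : Fin N → ℂ} (h : ∀ i : Fin N, ∑ ℓ, v ℓ * ξ ℓ ^ (i : ℕ) = 0) : ∀ ℓ, v ℓ = 0 := by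
  have hdet : (Matrix.vandermonde ξ)ᵀ.det ≠ 0 := by
    rw [Matrix.det_transpose, Matrix.det_vandermonde_ne_zero_iff]
    exact hinj
  have hmv : (Matrix.vandermonde ξ)ᵀ.mulVec v = 0 := by
    funext i
    simp only [Matrix.mulVec, dotProduct, Matrix.transpose_apply, Matrix.vandermonde,
      Matrix.of_apply, Pi.zero_apply]
    rw [← h i]
    exact Finset.sum_congr rfl fun ℓ _ => by ring
  have := Matrix.eq_zero_of_mulVec_eq_zero hdet hmv
  exact fun ℓ => congrFun this ℓ

lemma partial_fraction_zero {a d : ℕ} (ha : 1 ≤ a) (b : Fin a → ℕ → ℂ) {S : Set ℕ}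
    (hS : S.Infinite) (hSd : ∀ n ∈ S, d < n)
    (h : ∀ n ∈ S, ∑ j : Fin a, ∑ k ∈ Finset.range (d+1),
      b j k / ((n - k : ℕ) : ℂ) ^ ((j : ℕ) + 1) = 0) :
    ∀ (j : Fin a) (k : ℕ), k ≤ d → b j k = 0 := by
  set W : Polynomial ℂ := ∑ j : Fin a, ∑ k ∈ Finset.range (d+1),
    Polynomial.C (b j k) * (X - Polynomial.C (k : ℂ)) ^ (a - 1 - (j : ℕ)) *
      ∏ k' ∈ (Finset.range (d+1)).erase k, (X - Polynomial.C (k' : ℂ)) ^ a with hW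
  -- cast facts
  have hcast : ∀ (n : ℕ), n ∈ S → ∀ k, k ∈ Finset.range (d+1) →
      ((n - k : ℕ) : ℂ) = (n : ℂ) - (k : ℂ) := by
    intro n hn k hk
    have : k ≤ n := le_of_lt (lt_of_le_of_lt (Nat.lt_succ_iff.mp (Finset.mem_range.mp hk)) (hSd n hn))
    exact Nat.cast_sub this
  have hne : ∀ (n : ℕ), n ∈ S → ∀ k, k ∈ Finset.range (d+1) → ((n : ℂ) - (k : ℂ)) ≠ 0 := by
    intro n hn k hk
    rw [← hcast n hn k hk]
    have h1 : k < n := lt_of_le_of_lt (Nat.lt_succ_iff.mp (Finset.mem_range.mp hk)) (hSd n hn)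
    simp only [ne_eq, Nat.cast_eq_zero]
    omega
  -- Step 1 : W vanishes on S
  have hWeval : ∀ n ∈ S, W.eval (n : ℂ) = 0 := by
    intro n hn
    have hkey : W.eval (n : ℂ) =
        (∑ j : Fin a, ∑ k ∈ Finset.range (d+1),
          b j k / ((n - k : ℕ) : ℂ) ^ ((j : ℕ) + 1)) *
        ∏ k' ∈ Finset.range (d+1), ((n : ℂ) - (k' : ℂ)) ^ a := by
      rw [hW, Polynomial.eval_finset_sum, Finset.sum_mul]
      refine Finset.sum_congr rfl fun j _ => ?_
      rw [Polynomial.eval_finset_sum, Finset.sum_mul]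
      refine Finset.sum_congr rfl fun k hk => ?_
      rw [Polynomial.eval_mul, Polynomial.eval_mul, Polynomial.eval_C, Polynomial.eval_pow,
        Polynomial.eval_sub, Polynomial.eval_X, Polynomial.eval_C, Polynomial.eval_prod]
      simp only [Polynomial.eval_pow, Polynomial.eval_sub, Polynomial.eval_X, Polynomial.eval_C]
      rw [hcast n hn k hk, ← Finset.mul_prod_erase _ _ hk]
      have hx : ((n : ℂ) - (k : ℂ)) ≠ 0 := hne n hn k hk
      have hexp : ((j : ℕ) + 1) + (a - 1 - (j : ℕ)) = a := by
        have := j.isLt; omega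
      have hpow : ((n:ℂ) - (k:ℂ)) ^ a
          = ((n:ℂ) - (k:ℂ)) ^ ((j:ℕ)+1) * ((n:ℂ) - (k:ℂ)) ^ (a - 1 - (j:ℕ)) := by
        rw [← pow_add, hexp]
      rw [hpow]
      field_simp
    rw [hkey, h n hn, zero_mul]
  -- Step 2 : W = 0
  have hW0 : W = 0 := by
    apply Polynomial.eq_zero_of_infinite_isRoot
    apply Set.Infinite.mono (s := (fun n : ℕ => (n : ℂ)) '' S)
    · rintro x ⟨n, hn, rfl⟩
      exact hWeval n hn
    · exact Set.Infinite.image (fun x _ y _ hxy => Nat.cast_injective hxy) hS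
  -- Step 3 : extract coefficients
  intro j₀ k₀ hk₀
  have hk₀' : k₀ ∈ Finset.range (d+1) := Finset.mem_range.mpr (by omega)
  set Pk : Polynomial ℂ := ∑ j : Fin a,
      Polynomial.C (b j k₀) * (X - Polynomial.C (k₀ : ℂ)) ^ (a - 1 - (j : ℕ)) with hPk
  set u : Polynomial ℂ := ∏ k' ∈ (Finset.range (d+1)).erase k₀,
      (X - Polynomial.C (k' : ℂ)) ^ a with hu
  set R : Polynomial ℂ := ∑ j : Fin a, ∑ k ∈ (Finset.range (d+1)).erase k₀,
      Polynomial.C (b j k) * (X - Polynomial.C (k : ℂ)) ^ (a - 1 - (j : ℕ)) *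
        ∏ k' ∈ (Finset.range (d+1)).erase k, (X - Polynomial.C (k' : ℂ)) ^ a with hR
  have hsplit : W = Pk * u + R := by
    rw [hW, hPk, hR, Finset.sum_mul, ← Finset.sum_add_distrib]
    refine Finset.sum_congr rfl fun j _ => ?_
    rw [← Finset.add_sum_erase _ _ hk₀']
  have hdvdR : (X - Polynomial.C (k₀ : ℂ)) ^ a ∣ R := by
    apply Finset.dvd_sum
    intro j _
    apply Finset.dvd_sum
    intro k hk
    have hk₀mem : k₀ ∈ (Finset.range (d+1)).erase k := by
      rw [Finset.mem_erase]
      exact ⟨fun hkk => (Finset.mem_erase.mp hk).1 hkk.symm, hk₀'⟩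
    exact Dvd.dvd.mul_left (Finset.dvd_prod_of_mem _ hk₀mem) _
  have hdvdPku : (X - Polynomial.C (k₀ : ℂ)) ^ a ∣ Pk * u := by
    have : Pk * u = -R := by
      have := hsplit.symm.trans hW0
      linear_combination this
    rw [this]
    exact dvd_neg.mpr hdvdR
  have hcop : IsCoprime ((X - Polynomial.C (k₀ : ℂ)) ^ a) u := by
    apply IsCoprime.pow_left
    apply IsCoprime.prod_right
    intro k' hk'
    apply IsCoprime.pow_right
    apply Polynomial.isCoprime_X_sub_C_of_isUnit_sub
    have : (k₀ : ℂ) ≠ (k' : ℂ) := by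
      have := (Finset.mem_erase.mp hk').1
      simp only [ne_eq, Nat.cast_inj]
      omega
    exact (sub_ne_zero.mpr this).isUnit
  have hdvdPk : (X - Polynomial.C (k₀ : ℂ)) ^ a ∣ Pk := hcop.dvd_of_dvd_mul_right hdvdPku
  have hPk0 : Pk = 0 := by
    by_contra hne0
    have hle := Polynomial.natDegree_le_of_dvd hdvdPk hne0
    rw [Polynomial.natDegree_pow, Polynomial.natDegree_X_sub_C, mul_one] at hle
    have : Pk.natDegree ≤ a - 1 := by
      apply Polynomial.natDegree_sum_le_of_forall_le
      intro j _
      calc (Polynomial.C (b j k₀) * (X - Polynomial.C (k₀ : ℂ)) ^ (a - 1 - (j : ℕ))).natDegree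
          ≤ ((X - Polynomial.C (k₀ : ℂ)) ^ (a - 1 - (j : ℕ))).natDegree :=
            Polynomial.natDegree_C_mul_le _ _
        _ ≤ a - 1 := by
            rw [Polynomial.natDegree_pow, Polynomial.natDegree_X_sub_C, mul_one]; omega
    omega
  -- from Pk = 0 deduce coefficients
  have hcomp : (0 : Polynomial ℂ) = ∑ j : Fin a, Polynomial.C (b j k₀) * X ^ (a - 1 - (j : ℕ)) := by
    have h2 := congrArg (fun p : Polynomial ℂ => p.comp (X + Polynomial.C (k₀ : ℂ))) hPk0
    simp only [hPk, Polynomial.zero_comp, Polynomial.sum_comp, Polynomial.mul_comp,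
      Polynomial.C_comp, Polynomial.pow_comp, Polynomial.sub_comp, Polynomial.X_comp,
      Polynomial.add_comp, add_sub_cancel_right] at h2
    exact h2.symm
  have := congrArg (fun p : Polynomial ℂ => p.coeff (a - 1 - (j₀ : ℕ))) hcomp
  simp only [Polynomial.coeff_zero, Polynomial.finset_sum_coeff, Polynomial.coeff_C_mul,
    Polynomial.coeff_X_pow] at this
  rw [Finset.sum_eq_single j₀] at this
  · simpa using this.symm
  · intro j _ hj
    have h1 := j.isLt
    have h2 := j₀.isLt
    have hne2 : ¬ (a - 1 - (j₀ : ℕ) = a - 1 - (j : ℕ)) := by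
      intro hh
      exact hj (Fin.ext (by omega : (j : ℕ) = (j₀ : ℕ)))
    simp [hne2]
  · intro hj₀
    exact absurd (Finset.mem_univ j₀) hj₀

/-- Let `N ≥ 1` and `ω = e^{2iπ/N}`. The functions `1` and `Li_j(ω^ℓ z)`, for `j ≥ 1`
and `1 ≤ ℓ ≤ N`, are linearly independent over `ℂ(z)`: if
`Q(z) + ∑_{j=1}^a ∑_{ℓ=1}^N Q_{j,ℓ}(z) Li_j(ω^ℓ z) = 0` on some nonempty open subset of
the punctured open unit disk, with `Q, Q_{j,ℓ} ∈ ℂ(z)`, then `Q = 0` and all `Q_{j,ℓ} = 0`. -/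
theorem polylog_linear_independence_over_rational_functions
    (N : ℕ) (hN : 1 ≤ N) (a : ℕ) (ha : 1 ≤ a)
    (Q : RatFunc ℂ) (Qc : Fin a → Fin N → RatFunc ℂ)
    (hvanish : ∃ U : Set ℂ, IsOpen U ∧ U.Nonempty ∧
      U ⊆ {z : ℂ | z ≠ 0 ∧ ‖z‖ < 1} ∧
      ∀ z ∈ U,
        RatFunc.eval (RingHom.id ℂ) z Q +
          ∑ j : Fin a, ∑ ℓ : Fin N,
            RatFunc.eval (RingHom.id ℂ) z (Qc j ℓ) *
              polyLi (j + 1) (Complex.exp (2 * Real.pi * Complex.I / N) ^ ((ℓ : ℕ) + 1) * z)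
          = 0) :
    Q = 0 ∧ ∀ j ℓ, Qc j ℓ = 0 := by
  obtain ⟨U, hUo, hUne, hUsub, hrel⟩ := hvanish
  set ζ : ℂ := Complex.exp (2 * Real.pi * Complex.I / N) with hζ
  have hζprim : IsPrimitiveRoot ζ N := Complex.isPrimitiveRoot_exp N (by omega)
  set ξ : Fin N → ℂ := fun ℓ => ζ ^ ((ℓ : ℕ) + 1) with hξ
  have hζnorm : ‖ζ‖ = 1 := by
    have h1 : 2 * (Real.pi:ℂ) * Complex.I / (N:ℂ) = ((2 * Real.pi / (N:ℝ) : ℝ) : ℂ) * Complex.I := by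
      push_cast; ring
    rw [hζ]
    rw [show (2 * ↑Real.pi * Complex.I / ↑N : ℂ) = ((2 * Real.pi / (N:ℝ) : ℝ) : ℂ) * Complex.I from h1]
    exact Complex.norm_exp_ofReal_mul_I _
  have hζne : ζ ≠ 0 := Complex.exp_ne_zero _
  have hξnorm : ∀ ℓ, ‖ξ ℓ‖ = 1 := fun ℓ => by rw [hξ, norm_pow, hζnorm, one_pow]
  have hξne : ∀ ℓ, ξ ℓ ≠ 0 := fun ℓ => pow_ne_zero _ hζne
  have hξpowN : ∀ ℓ, ξ ℓ ^ N = 1 := fun ℓ => by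
    rw [hξ, ← pow_mul, mul_comm, pow_mul, hζprim.pow_eq_one, one_pow]
  have hξinj : Function.Injective ξ := by
    have key : ∀ ℓ₁ ℓ₂ : Fin N, (ℓ₁ : ℕ) ≤ (ℓ₂ : ℕ) → ξ ℓ₁ = ξ ℓ₂ → ℓ₁ = ℓ₂ := by
      intro ℓ₁ ℓ₂ hle heq
      have h1 : ζ ^ ((ℓ₂ : ℕ) + 1 - ((ℓ₁ : ℕ) + 1)) = 1 := by
        have h2 : ζ ^ ((ℓ₂ : ℕ) + 1) = ζ ^ ((ℓ₁ : ℕ) + 1) := heq.symm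
        rw [pow_sub₀ _ hζne (by omega), h2]
        exact mul_inv_cancel₀ (pow_ne_zero _ hζne)
      have h3 : N ∣ (ℓ₂ : ℕ) + 1 - ((ℓ₁ : ℕ) + 1) := (hζprim.pow_eq_one_iff_dvd _).mp h1
      have h4 := ℓ₂.isLt
      have h5 := Nat.eq_zero_of_dvd_of_lt h3
      have : (ℓ₂ : ℕ) + 1 - ((ℓ₁ : ℕ) + 1) = 0 := by
        by_contra hne0
        have := h5 (by omega)
        omega
      exact Fin.ext (by omega)
    intro ℓ₁ ℓ₂ heq
    rcases le_total (ℓ₁ : ℕ) (ℓ₂ : ℕ) with h | h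
    · exact key ℓ₁ ℓ₂ h heq
    · exact (key ℓ₂ ℓ₁ h heq.symm).symm
  -- polynomials
  set Pden : Polynomial ℂ := ∏ p : Fin a × Fin N, (Qc p.1 p.2).denom with hPden
  set den : Polynomial ℂ := Q.denom * Pden with hden
  set PQ : Polynomial ℂ := Q.num * Pden with hPQ
  set Pc : Fin a × Fin N → Polynomial ℂ := fun p =>
    (Qc p.1 p.2).num * (Q.denom * ∏ q ∈ Finset.univ.erase p, (Qc q.1 q.2).denom) with hPc
  have hPdenne : Pden ≠ 0 := Finset.prod_ne_zero_iff.mpr fun p _ => RatFunc.denom_ne_zero _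
  have hdenne : den ≠ 0 := mul_ne_zero (RatFunc.denom_ne_zero _) hPdenne
  set d : ℕ := Finset.univ.sup (fun p : Fin a × Fin N => (Pc p).natDegree) with hd
  have hdle : ∀ p : Fin a × Fin N, (Pc p).natDegree ≤ d := fun p => by
    rw [hd]
    exact Finset.le_sup (f := fun p : Fin a × Fin N => (Pc p).natDegree) (Finset.mem_univ p)
  set B : (Fin a × Fin N) → ℕ → ℂ := fun p n => ∑ k ∈ Finset.range (d+1),
    (Pc p).coeff k * (ξ p.2) ^ (n - k) / ((n - k : ℕ) : ℂ) ^ ((p.1 : ℕ) + 1) with hB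
  set A : ℕ → ℂ := fun n => PQ.coeff n + ∑ p : Fin a × Fin N, B p n with hA
  set G : ℂ → ℂ := fun z => PQ.eval z +
    ∑ p : Fin a × Fin N, (Pc p).eval z * polyLi ((p.1 : ℕ) + 1) (ξ p.2 * z) with hG
  -- HasSum
  have hGsum : ∀ z ∈ Metric.ball (0:ℂ) 1, HasSum (fun n => A n * z ^ n) (G z) := by
    intro z hz
    have hz1 : ‖z‖ < 1 := by simpa using hz
    have h1 : HasSum (fun n => PQ.coeff n * z ^ n) (PQ.eval z) := by
      have hvan : ∀ n ∉ Finset.range (PQ.natDegree + 1), PQ.coeff n * z ^ n = 0 := by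
        intro n hn
        have hlt : PQ.natDegree < n := by
          by_contra hcon
          exact hn (Finset.mem_range.mpr (by omega))
        rw [Polynomial.coeff_eq_zero_of_natDegree_lt hlt, zero_mul]
      have : HasSum (fun n => PQ.coeff n * z ^ n)
          (∑ n ∈ Finset.range (PQ.natDegree + 1), PQ.coeff n * z ^ n) :=
        hasSum_sum_of_ne_finset_zero hvan
      rwa [← Polynomial.eval_eq_sum_range] at this
    have h2 : HasSum (fun n => ∑ p : Fin a × Fin N, B p n * z ^ n)
        (∑ p : Fin a × Fin N, (Pc p).eval z * polyLi ((p.1 : ℕ) + 1) (ξ p.2 * z)) := by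
      apply hasSum_sum
      intro p _
      have hps := hasSum_poly_mul_polyLi (Pc p) (by omega : 1 ≤ (p.1:ℕ)+1) (hξnorm p.2) hz1
        (lt_of_le_of_lt (hdle p) (Nat.lt_succ_self d))
      simp only [hB]
      exact hps
    have hadd := h1.add h2
    have heq : (fun n => A n * z ^ n)
        = fun n => PQ.coeff n * z ^ n + ∑ p : Fin a × Fin N, B p n * z ^ n := by
      funext n
      rw [hA]
      rw [add_mul, Finset.sum_mul]
    rw [hG, heq]
    exact hadd
  -- bound
  obtain ⟨C, hC⟩ : ∃ C, ∀ n, ‖A n‖ ≤ C := by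
    refine ⟨(∑ k ∈ Finset.range (PQ.natDegree + 1), ‖PQ.coeff k‖) +
      ∑ p : Fin a × Fin N, ∑ k ∈ Finset.range (d+1), ‖(Pc p).coeff k‖, fun n => ?_⟩
    have h1 : ‖PQ.coeff n‖ ≤ ∑ k ∈ Finset.range (PQ.natDegree + 1), ‖PQ.coeff k‖ := by
      rcases lt_or_ge n (PQ.natDegree + 1) with h | h
      · exact Finset.single_le_sum (f := fun k => ‖PQ.coeff k‖) (fun k _ => norm_nonneg _)
          (Finset.mem_range.mpr h)
      · rw [Polynomial.coeff_eq_zero_of_natDegree_lt (by omega), norm_zero]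
        exact Finset.sum_nonneg fun k _ => norm_nonneg _
    have h2 : ∀ p : Fin a × Fin N, ‖B p n‖ ≤ ∑ k ∈ Finset.range (d+1), ‖(Pc p).coeff k‖ := by
      intro p
      rw [hB]
      refine (norm_sum_le _ _).trans (Finset.sum_le_sum fun k _ => ?_)
      have hterm : ‖(Pc p).coeff k * ξ p.2 ^ (n-k) / ((n-k:ℕ):ℂ) ^ ((p.1:ℕ)+1)‖
          = ‖(Pc p).coeff k‖ / ‖((n-k:ℕ):ℂ)‖ ^ ((p.1:ℕ)+1) := by
        simp only [norm_div, norm_mul, norm_pow, hζnorm, hξnorm, one_pow, mul_one]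
      rw [hterm]
      rcases Nat.eq_zero_or_pos (n - k) with h | h
      · rw [h]
        simp [norm_nonneg]
      · apply div_le_self (norm_nonneg _)
        apply one_le_pow₀
        rw [Complex.norm_natCast]
        exact_mod_cast h
    calc ‖A n‖ ≤ ‖PQ.coeff n‖ + ‖∑ p : Fin a × Fin N, B p n‖ := by
          rw [hA]; exact norm_add_le _ _
      _ ≤ ‖PQ.coeff n‖ + ∑ p : Fin a × Fin N, ‖B p n‖ :=
          add_le_add_right (norm_sum_le _ _) _
      _ ≤ _ := add_le_add h1 (Finset.sum_le_sum fun p _ => h2 p)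
  -- vanishing set
  have hexists : ∃ V : Set ℂ, IsOpen V ∧ V.Nonempty ∧ V ⊆ Metric.ball (0:ℂ) 1 ∧
      ∀ z ∈ V, G z = 0 := by
    have hrootfin : {z : ℂ | den.IsRoot z}.Finite := Polynomial.finite_setOf_isRoot hdenne
    refine ⟨U \ {z : ℂ | den.IsRoot z}, hUo.sdiff hrootfin.isClosed, ?_, ?_, ?_⟩
    · obtain ⟨z₀, hz₀⟩ := hUne
      have hUinf : U.Infinite := infinite_of_mem_nhds z₀ (hUo.mem_nhds hz₀)
      exact (hUinf.diff hrootfin).nonempty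
    · intro z hz
      rw [Metric.mem_ball, dist_zero_right]
      exact (hUsub hz.1).2
    · rintro z ⟨hzU, hzden⟩
      have hden0 : den.eval z ≠ 0 := hzden
      have hQdenne : Q.denom.eval z ≠ 0 := by
        intro h0
        apply hden0
        rw [hden, Polynomial.eval_mul, h0, zero_mul]
      have hPdenevalne : Pden.eval z ≠ 0 := by
        intro h0
        apply hden0
        rw [hden, Polynomial.eval_mul, h0, mul_zero]
      have hqq : ∀ p : Fin a × Fin N, (Qc p.1 p.2).denom.eval z ≠ 0 := by
        intro p h0
        apply hPdenevalne
        rw [hPden, Polynomial.eval_prod]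
        exact Finset.prod_eq_zero (Finset.mem_univ p) h0
      have heval : ∀ x : RatFunc ℂ, RatFunc.eval (RingHom.id ℂ) z x
          = x.num.eval z / x.denom.eval z := fun x => rfl
      have hterm : ∀ p : Fin a × Fin N,
          den.eval z * ((Qc p.1 p.2).num.eval z / (Qc p.1 p.2).denom.eval z)
          = (Pc p).eval z := by
        intro p
        have hsplit : Pden = (Qc p.1 p.2).denom * ∏ q ∈ Finset.univ.erase p, (Qc q.1 q.2).denom :=
          (Finset.mul_prod_erase _ _ (Finset.mem_univ p)).symm
        rw [mul_div_assoc', div_eq_iff (hqq p), hden, hsplit]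
        simp only [hPc, Polynomial.eval_mul]
        ring
      have hQterm : den.eval z * (Q.num.eval z / Q.denom.eval z) = PQ.eval z := by
        rw [mul_div_assoc', div_eq_iff hQdenne, hden, hPQ]
        simp only [Polynomial.eval_mul]
        ring
      have hr := hrel z hzU
      have hkey : G z = den.eval z * (RatFunc.eval (RingHom.id ℂ) z Q +
          ∑ j : Fin a, ∑ ℓ : Fin N, RatFunc.eval (RingHom.id ℂ) z (Qc j ℓ) *
            polyLi ((j : ℕ) + 1) (ζ ^ ((ℓ : ℕ) + 1) * z)) := by
        simp only [hG]
        rw [mul_add, heval Q, hQterm]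
        congr 1
        rw [Fintype.sum_prod_type, Finset.mul_sum]
        refine Finset.sum_congr rfl fun j _ => ?_
        rw [Finset.mul_sum]
        refine Finset.sum_congr rfl fun ℓ _ => ?_
        rw [heval, ← mul_assoc, hterm (j, ℓ)]
      rw [hkey, hr, mul_zero]
  obtain ⟨V, hVo, hVne, hVsub, hGV⟩ := hexists
  have hAzero : ∀ n, A n = 0 := coeffs_eq_zero_of_vanish hC hGsum hVo hVne hVsub hGV
  -- arithmetic: all coefficients of Pc vanish
  have hPccoeff : ∀ (p : Fin a × Fin N) (k : ℕ), k ≤ d → (Pc p).coeff k = 0 := by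
    set n₀ : ℕ := PQ.natDegree + d + 1 with hn₀
    have hbs : ∀ s : ℕ, n₀ ≤ s → ∀ (j : Fin a) (k : ℕ), k ≤ d →
        ∑ ℓ : Fin N, (Pc (j, ℓ)).coeff k * ξ ℓ ^ (s - k) = 0 := by
      intro s hs
      apply partial_fraction_zero ha (b := fun j k => ∑ ℓ : Fin N, (Pc (j,ℓ)).coeff k * ξ ℓ ^ (s-k))
        (S := {n : ℕ | ∃ m : ℕ, n = s + N * m})
      · refine Set.infinite_of_injective_forall_mem (f := fun m : ℕ => s + N * m) ?_ ?_
        · intro m₁ m₂ h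
          simp only [add_right_inj] at h
          exact Nat.eq_of_mul_eq_mul_left (by omega) h
        · exact fun m => ⟨m, rfl⟩
      · rintro n ⟨m, rfl⟩
        omega
      · rintro n ⟨m, rfl⟩
        have hA' := hAzero (s + N * m)
        simp only [hA] at hA'
        have hPQc : PQ.coeff (s + N*m) = 0 :=
          Polynomial.coeff_eq_zero_of_natDegree_lt (by omega)
        rw [hPQc, zero_add] at hA'
        rw [← hA', Fintype.sum_prod_type]
        refine Finset.sum_congr rfl fun j _ => ?_
        simp only [hB, Finset.sum_div]
        rw [Finset.sum_comm]
        refine Finset.sum_congr rfl fun ℓ _ => ?_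
        refine Finset.sum_congr rfl fun k hk => ?_
        have hkd : k ≤ d := Nat.lt_succ_iff.mp (Finset.mem_range.mp hk)
        have hnk : s + N * m - k = (s - k) + N * m := by omega
        have hpow : ξ ℓ ^ (s + N * m - k) = ξ ℓ ^ (s - k) := by
          rw [hnk, pow_add, pow_mul, hξpowN, one_pow, mul_one]
        rw [hpow]
    intro p k hk
    have hvdm : ∀ i : Fin N, ∑ ℓ : Fin N,
        ((Pc (p.1, ℓ)).coeff k * ξ ℓ ^ (n₀ - k)) * ξ ℓ ^ (i : ℕ) = 0 := by
      intro i
      have hb := hbs (n₀ + (i : ℕ)) (by omega) p.1 k hk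
      rw [← hb]
      refine Finset.sum_congr rfl fun ℓ _ => ?_
      have hnk : n₀ + (i : ℕ) - k = (n₀ - k) + (i : ℕ) := by omega
      rw [hnk, pow_add, mul_assoc]
    have hv := vandermonde_zero hξinj hvdm p.2
    rcases mul_eq_zero.mp hv with h | h
    · rw [← Prod.mk.eta (p := p)]
      exact h
    · exact absurd h (pow_ne_zero _ (hξne p.2))
  have hPczero : ∀ p, Pc p = 0 := by
    intro p
    ext k
    rcases le_or_gt k d with h | h
    · rw [hPccoeff p k h, Polynomial.coeff_zero]
    · rw [Polynomial.coeff_eq_zero_of_natDegree_lt (lt_of_le_of_lt (hdle p) h),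
        Polynomial.coeff_zero]
  have hPQzero : PQ = 0 := by
    ext n
    have h1 := hAzero n
    rw [hA] at h1
    simp only [Polynomial.coeff_zero]
    have h2 : ∀ p : Fin a × Fin N, B p n = 0 := by
      intro p
      rw [hB]
      apply Finset.sum_eq_zero
      intro k hk
      rw [hPccoeff p k (Nat.lt_succ_iff.mp (Finset.mem_range.mp hk)), zero_mul, zero_div]
    simp only [hA] at h1
    rw [Finset.sum_eq_zero (fun p _ => h2 p), add_zero] at h1
    exact h1
  constructor
  · have : Q.num = 0 := by
      have := hPQzero
      rw [hPQ] at this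
      rcases mul_eq_zero.mp this with h | h
      · exact h
      · exact absurd h hPdenne
    exact RatFunc.num_eq_zero_iff.mp this
  · intro j ℓ
    have h1 := hPczero (j, ℓ)
    rw [hPc] at h1
    have h2 : Q.denom * ∏ q ∈ Finset.univ.erase (j, ℓ), (Qc q.1 q.2).denom ≠ 0 :=
      mul_ne_zero (RatFunc.denom_ne_zero _)
        (Finset.prod_ne_zero_iff.mpr fun q _ => RatFunc.denom_ne_zero _)
    rcases mul_eq_zero.mp h1 with h | h
    · exact RatFunc.num_eq_zero_iff.mp h
    · exact absurd h h2
end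

section
/- Let a, r, N, n be positive integers with 2rN < a and N | n. Then for all z with |z| > 1, S_∞(z) = V(z) + ∑_{j=1}^a P_j(z) Li_j(1/z), where V(z) = −∑_{t=0}^{n−1} z^t ∑_{j=1}^a ∑_{h=⌈(t+1)/N⌉}^{n/N} p_{j,h}/(Nh−t)^j is a polynomial of degree at most n with rational coefficients. -/
/-- The rational function
`F(t) = (n/N)!^(a-2rN) (t-rn)_{rn} (t+n+1)_{rn} / ∏_{h=0}^{n/N} (t+Nh)^a`. -/
noncomputable def Frat (a r N n : ℕ) (t : ℚ) : ℚ :=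
  ((n / N).factorial : ℚ) ^ (a - 2 * r * N) *
    (ascPochhammer ℚ (r * n)).eval (t - r * n) *
    (ascPochhammer ℚ (r * n)).eval (t + n + 1) /
    ∏ h ∈ Finset.range (n / N + 1), (t + N * h) ^ a

/-- `p` is the family of partial fraction coefficients of `Frat a r N n`. -/
def IsPartialFractionCoeffs (a r N n : ℕ) (p : ℕ → ℕ → ℚ) : Prop :=
  ∀ t : ℚ, (∀ h ∈ Finset.range (n / N + 1), t + N * h ≠ 0) →
    Frat a r N n t =
      ∑ h ∈ Finset.range (n / N + 1), ∑ j ∈ Finset.Icc 1 a, p j h / (t + N * h) ^ j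

/-- `S_∞(z) = ∑_{t=1}^∞ F(t) z^{-t}` (for `|z| > 1`), over `ℂ`. -/
noncomputable def Sinf (a r N n : ℕ) (z : ℂ) : ℂ :=
  ∑' t : ℕ, (Frat a r N n ((t + 1 : ℕ) : ℚ) : ℂ) * z ^ (-((t : ℤ) + 1))

/-- `P_j(z) = ∑_{h=0}^{n/N} p_{j,h} z^{Nh}`. -/
noncomputable def Ppol (N n : ℕ) (p : ℕ → ℕ → ℚ) (j : ℕ) (z : ℂ) : ℂ :=
  ∑ h ∈ Finset.range (n / N + 1), (p j h : ℂ) * z ^ (N * h)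

/-- `V(z) = -∑_{t=0}^{n-1} z^t ∑_{j=1}^a ∑_{h=⌈(t+1)/N⌉}^{n/N} p_{j,h}/(Nh-t)^j`. -/
noncomputable def Vpol (a N n : ℕ) (p : ℕ → ℕ → ℚ) (z : ℂ) : ℂ :=
  -∑ t ∈ Finset.range n, z ^ t *
    ∑ j ∈ Finset.Icc 1 a, ∑ h ∈ Finset.Icc ((t + N) / N) (n / N),
      (p j h : ℂ) / ((N * h : ℂ) - t) ^ j

open Finset

lemma li_summable {w : ℂ} (hw : ‖w‖ < 1) {j : ℕ} (hj : 1 ≤ j) :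
    Summable (fun m : ℕ => w ^ m / (m : ℂ) ^ j) := by
  apply Summable.of_norm_bounded (summable_geometric_of_lt_one (norm_nonneg w) hw)
  intro m
  rcases Nat.eq_zero_or_pos m with rfl | hm
  · simp [zero_pow (by omega : j ≠ 0)]
  · rw [norm_div, norm_pow, norm_pow, Complex.norm_natCast]
    apply div_le_self (pow_nonneg (norm_nonneg _) _)
    exact one_le_pow₀ (by exact_mod_cast hm)

/-- Let `a, r, N, n` be positive integers with `2rN < a` and `N ∣ n`. Then for `|z| > 1`,
`S_∞(z) = V(z) + ∑_{j=1}^a P_j(z) Li_j(1/z)`, where `V` is the polynomial (of degree at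
most `n`, with rational coefficients) defined above. -/
theorem Sinf_Pade_expansion
    (a r N n : ℕ) (ha : 0 < a) (hr : 0 < r) (hN : 0 < N) (hn : 0 < n)
    (hra : 2 * r * N < a) (hNn : N ∣ n)
    (p : ℕ → ℕ → ℚ) (hp : IsPartialFractionCoeffs a r N n p) :
    ∀ z : ℂ, 1 < ‖z‖ →
      Sinf a r N n z = Vpol a N n p z +
        ∑ j ∈ Finset.Icc 1 a, Ppol N n p j z * polyLi j (1 / z) := by
  intro z hz
  have hz0 : z ≠ 0 := by
    intro h; rw [h, norm_zero] at hz; linarith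
  set w : ℂ := z⁻¹ with hwdef
  have hzw : z * w = 1 := mul_inv_cancel₀ hz0
  have hw : ‖w‖ < 1 := by
    rw [hwdef, norm_inv]
    exact inv_lt_one_of_one_lt₀ hz
  have hone : (1 : ℂ) / z = w := one_div z
  have hNh : ∀ h, h ≤ n / N → N * h ≤ n := by
    intro h hh
    calc N * h ≤ N * (n / N) := Nat.mul_le_mul_left _ hh
    _ = n := Nat.mul_div_cancel' hNn
  set g : ℕ → ℕ → ℂ := fun j m => w ^ m / (m : ℂ) ^ j with hgdef
  have hgsum : ∀ j, 1 ≤ j → Summable (g j) := fun j hj => li_summable hw hj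
  -- Step 1: rewrite the summand using partial fractions
  have step1 : Sinf a r N n z = ∑' t : ℕ, ∑ h ∈ range (n / N + 1), ∑ j ∈ Finset.Icc 1 a,
      (p j h : ℂ) * (z ^ (N * h) * g j (t + 1 + N * h)) := by
    unfold Sinf
    refine tsum_congr fun t => ?_
    have hne : ∀ h ∈ range (n / N + 1), ((t + 1 : ℕ) : ℚ) + N * h ≠ 0 := by
      intro h _
      positivity
    rw [hp _ hne]
    have hzpow : z ^ (-((t : ℤ) + 1)) = w ^ (t + 1) := by
      rw [show -((t : ℤ) + 1) = -((t + 1 : ℕ) : ℤ) by push_cast; ring, zpow_neg,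
        zpow_natCast, hwdef, inv_pow]
    rw [hzpow]
    push_cast
    rw [Finset.sum_mul]
    refine Finset.sum_congr rfl fun h _ => ?_
    rw [Finset.sum_mul]
    refine Finset.sum_congr rfl fun j _ => ?_
    have h1 : z ^ (N * h) * w ^ (t + 1 + N * h) = w ^ (t + 1) := by
      rw [pow_add, ← mul_assoc, mul_comm (z ^ (N * h)), mul_assoc, ← mul_pow, hzw,
        one_pow, mul_one]
    have h2 : ((t + 1 + N * h : ℕ) : ℂ) = (t : ℂ) + 1 + (N : ℂ) * h := by push_cast; ring
    rw [hgdef]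
    simp only [h2, ← mul_div_assoc, h1]
    ring
  -- summability of each term
  have hsummand : ∀ h, ∀ j ∈ Finset.Icc 1 a,
      Summable (fun t : ℕ => (p j h : ℂ) * (z ^ (N * h) * g j (t + 1 + N * h))) := by
    intro h j hj
    have hj1 : 1 ≤ j := (Finset.mem_Icc.mp hj).1
    have hs : Summable (fun t : ℕ => g j (t + (N * h + 1))) :=
      (summable_nat_add_iff (N * h + 1)).2 (hgsum j hj1)
    have := (hs.mul_left (z ^ (N * h))).mul_left ((p j h : ℂ))
    simpa [show ∀ t : ℕ, t + 1 + N * h = t + (N * h + 1) from fun t => by omega] using this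
  -- Step 2: swap tsum and finite sums, evaluate each inner tsum
  have step2 : Sinf a r N n z = ∑ h ∈ range (n / N + 1), ∑ j ∈ Finset.Icc 1 a,
      (p j h : ℂ) * z ^ (N * h) *
        (polyLi j (1 / z) - ∑ m ∈ range (N * h + 1), g j m) := by
    rw [step1, Summable.tsum_finsetSum fun h _ => summable_sum fun j hj => hsummand h j hj]
    refine Finset.sum_congr rfl fun h _ => ?_
    rw [Summable.tsum_finsetSum fun j hj => hsummand h j hj]
    refine Finset.sum_congr rfl fun j hj => ?_
    have hj1 : 1 ≤ j := (Finset.mem_Icc.mp hj).1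
    rw [tsum_mul_left, tsum_mul_left]
    have harg : (fun t : ℕ => g j (t + 1 + N * h)) = fun t : ℕ => g j (t + (N * h + 1)) := by
      funext t; congr 1; omega
    rw [harg]
    have hLi : polyLi j (1 / z) = ∑' m : ℕ, g j m := by
      rw [hone]; rfl
    have hshift := Summable.sum_add_tsum_nat_add (f := g j) (N * h + 1) (hgsum j hj1)
    rw [hLi]
    rw [← hshift]
    ring
  -- the correction-term identity, per h and j
  have sub : ∀ h, h ≤ n / N → ∀ j, 1 ≤ j →
      z ^ (N * h) * ∑ m ∈ range (N * h + 1), g j m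
        = ∑ t ∈ range n, if t < N * h then z ^ t / ((N : ℂ) * h - t) ^ j else 0 := by
    intro h hh j hj
    have hhn : N * h ≤ n := hNh h hh
    have r1 : ∑ m ∈ range (N * h + 1), g j m
        = ∑ t ∈ range (N * h + 1), g j (N * h - t) := by
      rw [← Finset.sum_range_reflect]
      refine Finset.sum_congr rfl fun t _ => ?_
      congr 1
      try omega
    rw [r1, Finset.mul_sum, Finset.sum_range_succ, Nat.sub_self]
    have hg0 : g j 0 = 0 := by
      simp [hgdef, zero_pow (by omega : j ≠ 0)]
    rw [hg0, mul_zero, add_zero]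
    have r2 : ∑ t ∈ range n, (if t < N * h then z ^ t / ((N : ℂ) * h - t) ^ j else 0)
        = ∑ t ∈ range (N * h), z ^ t / ((N : ℂ) * h - t) ^ j := by
      rw [← Finset.sum_filter]
      congr 1
      ext t
      simp only [mem_filter, mem_range]
      exact ⟨fun ⟨_, h2⟩ => h2, fun h2 => ⟨lt_of_lt_of_le h2 hhn, h2⟩⟩
    rw [r2]
    refine Finset.sum_congr rfl fun t ht => ?_
    have ht' : t < N * h := Finset.mem_range.mp ht
    have e1 : z ^ (N * h) * w ^ (N * h - t) = z ^ t := by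
      have h3 : z ^ (N * h) = z ^ t * z ^ (N * h - t) := by
        rw [← pow_add]; congr 1; omega
      rw [h3, mul_assoc, ← mul_pow, hzw, one_pow, mul_one]
    have e2 : ((N * h - t : ℕ) : ℂ) = (N : ℂ) * h - t := by
      rw [Nat.cast_sub ht'.le]; push_cast; ring
    rw [hgdef]
    simp only [e2, ← mul_div_assoc, e1]
  -- the filter/Icc identity
  have hfil : ∀ t : ℕ, (range (n / N + 1)).filter (fun h => t < N * h)
      = Finset.Icc ((t + N) / N) (n / N) := by
    intro t
    ext h
    simp only [mem_filter, mem_range, Nat.lt_succ_iff, mem_Icc]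
    have key : (t + N) / N ≤ h ↔ t < N * h := by
      rw [Nat.div_le_iff_le_mul_add_pred hN]
      generalize N * h = K
      omega
    rw [key]
    tauto
  have inner : ∀ t j : ℕ,
      ∑ h ∈ range (n / N + 1), (p j h : ℂ) *
          (if t < N * h then z ^ t / ((N : ℂ) * h - t) ^ j else 0)
        = z ^ t * ∑ h ∈ Finset.Icc ((t + N) / N) (n / N),
            (p j h : ℂ) / ((N : ℂ) * h - t) ^ j := by
    intro t j
    rw [← hfil t, Finset.mul_sum, Finset.sum_filter]
    refine Finset.sum_congr rfl fun h _ => ?_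
    split
    · ring
    · simp
  have second : ∑ h ∈ range (n / N + 1), ∑ j ∈ Finset.Icc 1 a,
      (p j h : ℂ) * z ^ (N * h) * ∑ m ∈ range (N * h + 1), g j m
      = -Vpol a N n p z := by
    rw [Vpol, neg_neg]
    have lhs1 : ∀ h ∈ range (n / N + 1), ∀ j ∈ Finset.Icc 1 a,
        (p j h : ℂ) * z ^ (N * h) * ∑ m ∈ range (N * h + 1), g j m
        = ∑ t ∈ range n, (p j h : ℂ) *
            (if t < N * h then z ^ t / ((N : ℂ) * h - t) ^ j else 0) := by
      intro h hh j hj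
      rw [mul_assoc, sub h (Nat.lt_succ_iff.mp (Finset.mem_range.mp hh)) j
        (Finset.mem_Icc.mp hj).1, Finset.mul_sum]
    calc ∑ h ∈ range (n / N + 1), ∑ j ∈ Finset.Icc 1 a,
        (p j h : ℂ) * z ^ (N * h) * ∑ m ∈ range (N * h + 1), g j m
        = ∑ h ∈ range (n / N + 1), ∑ j ∈ Finset.Icc 1 a, ∑ t ∈ range n,
            (p j h : ℂ) * (if t < N * h then z ^ t / ((N : ℂ) * h - t) ^ j else 0) :=
          Finset.sum_congr rfl fun h hh => Finset.sum_congr rfl fun j hj => lhs1 h hh j hj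
      _ = ∑ h ∈ range (n / N + 1), ∑ t ∈ range n, ∑ j ∈ Finset.Icc 1 a,
            (p j h : ℂ) * (if t < N * h then z ^ t / ((N : ℂ) * h - t) ^ j else 0) :=
          Finset.sum_congr rfl fun h _ => Finset.sum_comm
      _ = ∑ t ∈ range n, ∑ h ∈ range (n / N + 1), ∑ j ∈ Finset.Icc 1 a,
            (p j h : ℂ) * (if t < N * h then z ^ t / ((N : ℂ) * h - t) ^ j else 0) :=
          Finset.sum_comm
      _ = ∑ t ∈ range n, ∑ j ∈ Finset.Icc 1 a, ∑ h ∈ range (n / N + 1),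
            (p j h : ℂ) * (if t < N * h then z ^ t / ((N : ℂ) * h - t) ^ j else 0) :=
          Finset.sum_congr rfl fun t _ => Finset.sum_comm
      _ = ∑ t ∈ range n, ∑ j ∈ Finset.Icc 1 a,
            z ^ t * ∑ h ∈ Finset.Icc ((t + N) / N) (n / N),
              (p j h : ℂ) / ((N : ℂ) * h - t) ^ j :=
          Finset.sum_congr rfl fun t _ => Finset.sum_congr rfl fun j _ => inner t j
      _ = ∑ t ∈ range n, z ^ t * ∑ j ∈ Finset.Icc 1 a,
            ∑ h ∈ Finset.Icc ((t + N) / N) (n / N),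
              (p j h : ℂ) / ((N : ℂ) * h - t) ^ j := by
          refine Finset.sum_congr rfl fun t _ => ?_
          rw [Finset.mul_sum]
  have first : ∑ h ∈ range (n / N + 1), ∑ j ∈ Finset.Icc 1 a,
      (p j h : ℂ) * z ^ (N * h) * polyLi j (1 / z)
      = ∑ j ∈ Finset.Icc 1 a, Ppol N n p j z * polyLi j (1 / z) := by
    rw [Finset.sum_comm]
    refine Finset.sum_congr rfl fun j _ => ?_
    rw [Ppol, Finset.sum_mul]
  have comb : ∑ h ∈ range (n / N + 1), ∑ j ∈ Finset.Icc 1 a,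
      (p j h : ℂ) * z ^ (N * h) *
        (polyLi j (1 / z) - ∑ m ∈ range (N * h + 1), g j m)
      = (∑ h ∈ range (n / N + 1), ∑ j ∈ Finset.Icc 1 a,
          (p j h : ℂ) * z ^ (N * h) * polyLi j (1 / z))
        - ∑ h ∈ range (n / N + 1), ∑ j ∈ Finset.Icc 1 a,
            (p j h : ℂ) * z ^ (N * h) * ∑ m ∈ range (N * h + 1), g j m := by
    rw [← Finset.sum_sub_distrib]
    refine Finset.sum_congr rfl fun h _ => ?_
    rw [← Finset.sum_sub_distrib]
    refine Finset.sum_congr rfl fun j _ => ?_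
    ring
  rw [step2, comb, first, second]
  ring
end

section
/- Let a, r, N, n be positive integers with 2rN < a and N | n, and set d₀ = a(n/N + 1) − 2rn. Define P_{k,j}, U_k, V_k by the recursions P_{1,j} = P_j, P_{k,j} = P'_{k−1,j} − (1/z)P_{k−1,j+1} (with P_{k−1,a+1} = 0), U₁ = U, U_k = U'_{k−1} − P_{k−1,1}/(1−z), V₁ = V, V_k = V'_{k−1} + P_{k−1,1}/(z(1−z)). Then for every k with 1 ≤ k ≤ d₀ − 1: P_{k,1}(1) = 0, and the rational functions U_k and V_k have no pole at z = 1. -/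
/-- `P_j(z) = ∑_{h=0}^{n/N} p_{j,h} z^{Nh}` for `1 ≤ j ≤ a`, and `0` otherwise. -/
noncomputable def Ppoly (a N n : ℕ) (p : ℕ → ℕ → ℚ) (j : ℕ) : Polynomial ℚ :=
  if 1 ≤ j ∧ j ≤ a then
    ∑ h ∈ Finset.range (n / N + 1), Polynomial.C (p j h) * Polynomial.X ^ (N * h)
  else 0

noncomputable def Upoly (a N n : ℕ) (p : ℕ → ℕ → ℚ) : Polynomial ℚ :=
  -∑ t ∈ Finset.Icc 1 n,
    Polynomial.C (∑ j ∈ Finset.Icc 1 a, ∑ h ∈ Finset.range ((t - 1) / N + 1),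
      p j h / ((t : ℚ) - N * h) ^ j) * Polynomial.X ^ t

noncomputable def Vpoly (a N n : ℕ) (p : ℕ → ℕ → ℚ) : Polynomial ℚ :=
  -∑ t ∈ Finset.range n,
    Polynomial.C (∑ j ∈ Finset.Icc 1 a, ∑ h ∈ Finset.Icc ((t + N) / N) (n / N),
      p j h / ((N * h : ℚ) - t) ^ j) * Polynomial.X ^ t

/-- Derivative of a rational function. -/
noncomputable def ratDeriv (f : RatFunc ℚ) : RatFunc ℚ :=
  RatFunc.mk (Polynomial.derivative f.num * f.denom - f.num * Polynomial.derivative f.denom)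
    (f.denom ^ 2)

/-- `P_{k,j}` (with `k` shifted: `PPk k j = P_{k+1,j}`), defined by `P_{1,j} = P_j` and
`P_{k,j} = P'_{k-1,j} - (1/z) P_{k-1,j+1}`, where `P_{k-1,a+1} = 0`. -/
noncomputable def PPk (a N n : ℕ) (p : ℕ → ℕ → ℚ) : ℕ → ℕ → RatFunc ℚ
  | 0, j => algebraMap (Polynomial ℚ) (RatFunc ℚ) (Ppoly a N n p j)
  | k + 1, j => ratDeriv (PPk a N n p k j) - (1 / RatFunc.X) * PPk a N n p k (j + 1)

/-- `U_k` (with `k` shifted: `UkF k = U_{k+1}`): `U₁ = U`, `U_k = U'_{k-1} - P_{k-1,1}/(1-z)`. -/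
noncomputable def UkF (a N n : ℕ) (p : ℕ → ℕ → ℚ) : ℕ → RatFunc ℚ
  | 0 => algebraMap (Polynomial ℚ) (RatFunc ℚ) (Upoly a N n p)
  | k + 1 => ratDeriv (UkF a N n p k) - (1 / (1 - RatFunc.X)) * PPk a N n p k 1

/-- `V_k` (with `k` shifted: `VkF k = V_{k+1}`): `V₁ = V`, `V_k = V'_{k-1} + P_{k-1,1}/(z(1-z))`. -/
noncomputable def VkF (a N n : ℕ) (p : ℕ → ℕ → ℚ) : ℕ → RatFunc ℚ
  | 0 => algebraMap (Polynomial ℚ) (RatFunc ℚ) (Vpoly a N n p)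
  | k + 1 => ratDeriv (VkF a N n p k) + (1 / (RatFunc.X * (1 - RatFunc.X))) * PPk a N n p k 1

section Aux
open Polynomial Finset

lemma am_inj : Function.Injective (algebraMap (Polynomial ℚ) (RatFunc ℚ)) :=
  IsFractionRing.injective _ _

lemma ratDeriv_div (g h : Polynomial ℚ) (hh : h ≠ 0) :
    ratDeriv (algebraMap (Polynomial ℚ) (RatFunc ℚ) g / algebraMap _ _ h)
      = algebraMap (Polynomial ℚ) (RatFunc ℚ)
          (derivative g * h - g * derivative h) / algebraMap _ _ (h ^ 2) := by
  set f := algebraMap (Polynomial ℚ) (RatFunc ℚ) g / algebraMap _ _ h with hf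
  have hd : f.denom ≠ 0 := RatFunc.denom_ne_zero f
  have hnd : algebraMap (Polynomial ℚ) (RatFunc ℚ) f.num / algebraMap _ _ f.denom = f :=
    RatFunc.num_div_denom f
  have E : f.num * h = g * f.denom := by
    apply am_inj
    have h1 : algebraMap (Polynomial ℚ) (RatFunc ℚ) h ≠ 0 := RatFunc.algebraMap_ne_zero hh
    have h2 : algebraMap (Polynomial ℚ) (RatFunc ℚ) f.denom ≠ 0 :=
      RatFunc.algebraMap_ne_zero hd
    rw [map_mul, map_mul]
    rw [div_eq_div_iff h2 h1] at hnd
    rw [hnd]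
  have E' : derivative f.num * h + f.num * derivative h
      = derivative g * f.denom + g * derivative f.denom := by
    have := congrArg derivative E
    simpa [derivative_mul] using this
  rw [ratDeriv, RatFunc.mk_eq_div]
  rw [div_eq_div_iff (RatFunc.algebraMap_ne_zero (pow_ne_zero 2 hd))
    (RatFunc.algebraMap_ne_zero (pow_ne_zero 2 hh))]
  rw [← map_mul, ← map_mul]
  refine congrArg _ ?_
  linear_combination (f.denom * h) * E' - (derivative f.denom * h + f.denom * derivative h) * E

/-- `f` has no pole at 1, witnessed by representation with denominator nonvanishing at 1. -/
def Nice (f : RatFunc ℚ) : Prop :=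
  ∃ g h : Polynomial ℚ, h.eval 1 ≠ 0 ∧
    f = algebraMap (Polynomial ℚ) (RatFunc ℚ) g / algebraMap _ _ h

lemma Nice.denom_eval_ne (f : RatFunc ℚ) (hf : Nice f) : f.denom.eval 1 ≠ 0 := by
  obtain ⟨g, h, h1, rfl⟩ := hf
  have hd := RatFunc.denom_div_dvd g h
  obtain ⟨w, hw⟩ := hd
  intro h0
  apply h1
  rw [hw, eval_mul, h0, zero_mul]

lemma nice_algebraMap (g : Polynomial ℚ) : Nice (algebraMap (Polynomial ℚ) (RatFunc ℚ) g) :=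
  ⟨g, 1, by norm_num, by simp⟩

lemma Nice.ratDeriv {f : RatFunc ℚ} (hf : Nice f) : Nice (ratDeriv f) := by
  obtain ⟨g, h, h1, rfl⟩ := hf
  have hh : h ≠ 0 := fun h0 => h1 (by simp [h0])
  rw [ratDeriv_div g h hh]
  exact ⟨_, h ^ 2, by simpa using pow_ne_zero 2 h1, rfl⟩

lemma Nice.sub {f g : RatFunc ℚ} (hf : Nice f) (hg : Nice g) : Nice (f - g) := by
  obtain ⟨g1, h1, e1, rfl⟩ := hf
  obtain ⟨g2, h2, e2, rfl⟩ := hg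
  refine ⟨g1 * h2 - g2 * h1, h1 * h2, by simp [e1, e2], ?_⟩
  have n1 : (algebraMap (Polynomial ℚ) (RatFunc ℚ)) h1 ≠ 0 :=
    RatFunc.algebraMap_ne_zero (fun h0 => e1 (by simp [h0]))
  have n2 : (algebraMap (Polynomial ℚ) (RatFunc ℚ)) h2 ≠ 0 :=
    RatFunc.algebraMap_ne_zero (fun h0 => e2 (by simp [h0]))
  field_simp
  simp only [map_mul, map_sub]
  ring

lemma Nice.add {f g : RatFunc ℚ} (hf : Nice f) (hg : Nice g) : Nice (f + g) := by
  have := hf.sub (f := f) (g := -g) ?_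
  · simpa using this
  · obtain ⟨g2, h2, e2, rfl⟩ := hg
    exact ⟨-g2, h2, e2, by simp [neg_div]⟩

/-- coefficients `c_{k,j,h}` -/
noncomputable def cc (a N : ℕ) (p : ℕ → ℕ → ℚ) : ℕ → ℕ → ℕ → ℚ
  | 0, j, h => if 1 ≤ j ∧ j ≤ a then p j h else 0
  | k + 1, j, h => ((N : ℚ) * h - k) * cc a N p k j h - cc a N p k (j + 1) h

noncomputable def Pc (a N n : ℕ) (p : ℕ → ℕ → ℚ) (k j : ℕ) : Polynomial ℚ :=
  ∑ h ∈ Finset.range (n / N + 1), C (cc a N p k j h) * X ^ (N * h)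

lemma X_mul_derivative_X_pow (e : ℕ) : (X : Polynomial ℚ) * derivative (X ^ e) = C (e : ℚ) * X ^ e := by
  cases e with
  | zero => simp
  | succ m =>
    rw [derivative_X_pow, Nat.add_sub_cancel]
    push_cast
    ring

lemma Pc_rec (a N n : ℕ) (p : ℕ → ℕ → ℚ) (k j : ℕ) :
    Pc a N n p (k + 1) j
      = X * derivative (Pc a N n p k j) - C (k : ℚ) * Pc a N n p k j - Pc a N n p k (j + 1) := by
  unfold Pc
  simp only [derivative_sum, Finset.mul_sum, ← Finset.sum_sub_distrib]
  refine sum_congr rfl fun h _ => ?_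
  rw [derivative_C_mul, cc, mul_left_comm, X_mul_derivative_X_pow]
  push_cast
  simp only [C_sub, C_mul, C_neg, C_add]
  ring

lemma PPk_eq (a N n : ℕ) (p : ℕ → ℕ → ℚ) (k j : ℕ) :
    PPk a N n p k j
      = algebraMap (Polynomial ℚ) (RatFunc ℚ) (Pc a N n p k j) / RatFunc.X ^ k := by
  induction k generalizing j with
  | zero =>
    rw [PPk, pow_zero, div_one]
    congr 1
    rw [Ppoly]; unfold Pc
    split_ifs with hc
    · refine sum_congr rfl fun h _ => by rw [cc, if_pos hc]
    · rw [eq_comm, sum_eq_zero]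
      intro h _
      rw [cc, if_neg hc, map_zero, zero_mul]
  | succ k ih =>
    have hX : (RatFunc.X : RatFunc ℚ) ≠ 0 := RatFunc.X_ne_zero
    have hXp : (X : Polynomial ℚ) ^ k ≠ 0 := pow_ne_zero _ X_ne_zero
    rw [PPk, ih j, ih (j + 1)]
    have hXmap : (RatFunc.X : RatFunc ℚ) ^ k
        = algebraMap (Polynomial ℚ) (RatFunc ℚ) (X ^ k) := by
      rw [map_pow, RatFunc.algebraMap_X]
    rw [hXmap, ratDeriv_div _ _ hXp, Pc_rec]
    rw [derivative_X_pow]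
    simp only [map_sub, map_mul, map_pow, RatFunc.algebraMap_X, map_natCast]
    cases k with
    | zero =>
      simp only [pow_zero, Nat.cast_zero, zero_mul, mul_zero, sub_zero, pow_one, Nat.zero_sub,
        Nat.cast_ofNat]
      field_simp
      ring
    | succ m =>
      simp only [Nat.add_sub_cancel]
      field_simp
      ring

lemma asc_eval (m : ℕ) (u : ℚ) :
    (ascPochhammer ℚ m).eval u = ∏ i ∈ range m, (u + i) := by
  induction m with
  | zero => simp
  | succ k ih =>
    rw [ascPochhammer_succ_right, prod_range_succ, ← ih]
    simp [eval_mul]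

noncomputable def Arp (a r N n : ℕ) : Polynomial ℚ :=
  C (((n / N).factorial : ℚ) ^ (a - 2 * r * N)) *
    (∏ i ∈ range (r * n), (1 + C ((i : ℚ) - r * n) * X)) *
    (∏ i ∈ range (r * n), (1 + C ((n : ℚ) + 1 + i) * X))

noncomputable def Qrjh (a N n : ℕ) (j h : ℕ) : Polynomial ℚ :=
  (1 + C ((N : ℚ) * h) * X) ^ (a - j) *
    ∏ h' ∈ (range (n / N + 1)).erase h, (1 + C ((N : ℚ) * h') * X) ^ a

noncomputable def RHSp (a N n : ℕ) (p : ℕ → ℕ → ℚ) : Polynomial ℚ :=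
  ∑ h ∈ range (n / N + 1), ∑ j ∈ Finset.Icc 1 a,
    C (p j h) * X ^ j * Qrjh a N n j h

lemma poly_id (a r N n : ℕ) (hra : 2 * r * N < a) (hN : 0 < N) (hNn : N ∣ n)
    (p : ℕ → ℕ → ℚ) (hp : IsPartialFractionCoeffs a r N n p) :
    X ^ (a * (n / N + 1) - 2 * r * n) * Arp a r N n = RHSp a N n p := by
  have hD2 : 2 * r * n ≤ a * (n / N + 1) := by
    calc 2 * r * n = 2 * r * (N * (n / N)) := by rw [Nat.mul_div_cancel' hNn]
    _ = 2 * r * N * (n / N) := by ring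
    _ ≤ a * (n / N) := Nat.mul_le_mul_right _ (le_of_lt hra)
    _ ≤ a * (n / N + 1) := Nat.mul_le_mul_left _ (Nat.le_succ _)
  apply eq_of_infinite_eval_eq
  have hsub : {x : ℚ | x ≠ 0 ∧ ∀ h ∈ range (n / N + 1), 1 + (N : ℚ) * h * x ≠ 0} ⊆
      {x | eval x (X ^ (a * (n / N + 1) - 2 * r * n) * Arp a r N n) = eval x (RHSp a N n p)} := by
    rintro x ⟨hx0, hx1⟩
    simp only [Set.mem_setOf_eq]
    set t : ℚ := x⁻¹ with hts
    have htx : t * x = 1 := inv_mul_cancel₀ hx0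
    have hfac : ∀ h : ℕ, (t + N * h) * x = 1 + (N : ℚ) * h * x := by
      intro h
      calc (t + (N:ℚ) * h) * x = t * x + (N:ℚ) * h * x := add_mul _ _ _
      _ = 1 + (N:ℚ) * h * x := by rw [htx]
    have hth : ∀ h ∈ range (n / N + 1), t + (N : ℚ) * h ≠ 0 := by
      intro h hh h0
      exact hx1 h hh (by rw [← hfac h, h0, zero_mul])
    have hpe := hp t hth
    -- notation
    set D := a * (n / N + 1) with hD
    have hQd : (∏ h ∈ range (n / N + 1), (t + (N : ℚ) * h) ^ a) ≠ 0 :=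
      prod_ne_zero_iff.mpr fun h hh => pow_ne_zero _ (hth h hh)
    -- C: product relation
    have hC : (∏ h ∈ range (n / N + 1), (t + (N : ℚ) * h) ^ a) * x ^ D =
        ∏ h ∈ range (n / N + 1), (1 + (N : ℚ) * h * x) ^ a := by
      have e : ∀ h ∈ range (n / N + 1), (1 + (N : ℚ) * h * x) ^ a = (t + (N:ℚ)*h)^a * x^a :=
        fun h _ => by rw [← mul_pow, hfac]
      rw [prod_congr rfl e, prod_mul_distrib, prod_const, card_range, ← pow_mul, hD]
    -- A1
    have hA1 : (∏ i ∈ range (r * n), ((t : ℚ) - r * n + i)) * x ^ (r * n) =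
        ∏ i ∈ range (r * n), (1 + ((i : ℚ) - r * n) * x) := by
      have e : ∀ i ∈ range (r * n), (1 + ((i : ℚ) - r * n) * x) = ((t:ℚ) - r*n + i) * x :=
        fun i _ => by linear_combination -htx
      rw [prod_congr rfl e, prod_mul_distrib, prod_const, card_range]
    have hA2 : (∏ i ∈ range (r * n), ((t : ℚ) + n + 1 + i)) * x ^ (r * n) =
        ∏ i ∈ range (r * n), (1 + ((n : ℚ) + 1 + i) * x) := by
      have e : ∀ i ∈ range (r * n), (1 + ((n : ℚ) + 1 + i) * x) = ((t:ℚ) + n + 1 + i) * x :=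
        fun i _ => by linear_combination -htx
      rw [prod_congr rfl e, prod_mul_distrib, prod_const, card_range]
    -- unfold Frat in hpe
    rw [Frat, asc_eval, asc_eval] at hpe
    have hpe' : ((n / N).factorial : ℚ) ^ (a - 2 * r * N) *
        (∏ i ∈ range (r * n), (t - r * n + i)) * (∏ i ∈ range (r * n), (t + n + 1 + i)) =
        (∑ h ∈ range (n / N + 1), ∑ j ∈ Finset.Icc 1 a, p j h / (t + N * h) ^ j) *
          ∏ h ∈ range (n / N + 1), (t + (N : ℚ) * h) ^ a := by
      rw [← hpe, div_mul_cancel₀ _ hQd]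
    -- evaluate both sides
    have hevL : eval x (X ^ (D - 2 * r * n) * Arp a r N n) =
        x ^ (D - 2 * r * n) * (((n / N).factorial : ℚ) ^ (a - 2 * r * N) *
          (∏ i ∈ range (r * n), (1 + ((i : ℚ) - r * n) * x)) *
          (∏ i ∈ range (r * n), (1 + ((n : ℚ) + 1 + i) * x))) := by
      rw [eval_mul, eval_pow, eval_X, Arp, eval_mul, eval_mul, eval_C, eval_prod, eval_prod]
      simp [eval_add, eval_mul]
    rw [hevL]
    -- evaluate RHS
    rw [RHSp, eval_finset_sum]
    have hterm : ∀ h ∈ range (n / N + 1),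
        eval x (∑ j ∈ Finset.Icc 1 a, C (p j h) * X ^ j * Qrjh a N n j h) =
        ∑ j ∈ Finset.Icc 1 a, p j h / (t + N * h) ^ j *
          ∏ h' ∈ range (n / N + 1), (1 + (N : ℚ) * h' * x) ^ a := by
      intro h hh
      rw [eval_finset_sum]
      refine sum_congr rfl fun j hj => ?_
      obtain ⟨hj1, hj2⟩ := Finset.mem_Icc.mp hj
      rw [eval_mul, eval_mul, eval_C, eval_pow, eval_X, Qrjh, eval_mul, eval_pow, eval_prod]
      have e1 : eval x (1 + C ((N : ℚ) * h) * X) = 1 + (N : ℚ) * h * x := by simp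
      rw [e1]
      have e2 : ∀ h' ∈ (range (n / N + 1)).erase h,
          eval x ((1 + C ((N : ℚ) * h') * X) ^ a) = (1 + (N : ℚ) * h' * x) ^ a := by
        intro h' _; simp
      rw [prod_congr rfl e2]
      -- split full product
      have hsplit : ∏ h' ∈ range (n / N + 1), (1 + (N : ℚ) * h' * x) ^ a =
          (1 + (N : ℚ) * h * x) ^ a *
            ∏ h' ∈ (range (n / N + 1)).erase h, (1 + (N : ℚ) * h' * x) ^ a :=
        (Finset.mul_prod_erase _ _ hh).symm
      rw [hsplit]
      have hfach : (t + (N : ℚ) * h) ≠ 0 := hth h hh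
      have hpowsplit : (1 + (N : ℚ) * h * x) ^ a =
          (1 + (N : ℚ) * h * x) ^ (a - j) * ((t + (N : ℚ) * h) ^ j * x ^ j) := by
        rw [← mul_pow, hfac, ← pow_add, Nat.sub_add_cancel hj2]
      rw [hpowsplit]
      field_simp
    rw [sum_congr rfl hterm]
    have hgather : (∑ h ∈ range (n / N + 1), ∑ j ∈ Finset.Icc 1 a,
          p j h / (t + (N:ℚ) * h) ^ j * ∏ h' ∈ range (n / N + 1), (1 + (N : ℚ) * h' * x) ^ a)
        = (∑ h ∈ range (n / N + 1), ∑ j ∈ Finset.Icc 1 a, p j h / (t + (N:ℚ) * h) ^ j) *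
          ∏ h' ∈ range (n / N + 1), (1 + (N : ℚ) * h' * x) ^ a := by
      rw [sum_mul]
      exact sum_congr rfl fun h _ => by rw [sum_mul]
    rw [hgather, ← hC]
    have hxD : x ^ (D - 2 * r * n) * x ^ (2 * r * n) = x ^ D := by
      rw [← pow_add, Nat.sub_add_cancel hD2]
    calc x ^ (D - 2 * r * n) * (((n / N).factorial : ℚ) ^ (a - 2 * r * N) *
          (∏ i ∈ range (r * n), (1 + ((i : ℚ) - r * n) * x)) *
          (∏ i ∈ range (r * n), (1 + ((n : ℚ) + 1 + i) * x)))
        = x ^ (D - 2 * r * n) * (((n / N).factorial : ℚ) ^ (a - 2 * r * N) *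
          ((∏ i ∈ range (r * n), (t - r * n + i)) * x ^ (r * n)) *
          ((∏ i ∈ range (r * n), (t + n + 1 + i)) * x ^ (r * n))) := by rw [hA1, hA2]
      _ = (((n / N).factorial : ℚ) ^ (a - 2 * r * N) *
          (∏ i ∈ range (r * n), (t - r * n + i)) * (∏ i ∈ range (r * n), (t + n + 1 + i))) *
          (x ^ (D - 2 * r * n) * x ^ (2 * r * n)) := by
            have hxx : x ^ (r * n) * x ^ (r * n) = x ^ (2 * r * n) := by
              rw [← pow_add]; congr 1; ring
            rw [← hxx]; ring
      _ = (∑ h ∈ range (n / N + 1), ∑ j ∈ Finset.Icc 1 a, p j h / (t + N * h) ^ j) *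
          (∏ h ∈ range (n / N + 1), (t + (N : ℚ) * h) ^ a) * x ^ D := by
            rw [hxD, hpe']
      _ = (∑ h ∈ range (n / N + 1), ∑ j ∈ Finset.Icc 1 a, p j h / (t + N * h) ^ j) *
          ((∏ h ∈ range (n / N + 1), (t + (N : ℚ) * h) ^ a) * x ^ D) := by ring
  refine Set.Infinite.mono hsub ?_
  -- the good set is infinite
  have hfin : ({x : ℚ | x = 0 ∨ ∃ h ∈ range (n / N + 1), 1 + (N : ℚ) * h * x = 0}).Finite := by
    have : {x : ℚ | x = 0 ∨ ∃ h ∈ range (n / N + 1), 1 + (N : ℚ) * h * x = 0} ⊆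
        {0} ∪ ⋃ h ∈ (range (n / N + 1) : Finset ℕ), {x : ℚ | 1 + (N : ℚ) * h * x = 0} := by
      rintro x (rfl | ⟨h, hh, hx⟩)
      · exact Or.inl rfl
      · exact Or.inr (Set.mem_biUnion hh hx)
    refine Set.Finite.subset ?_ this
    refine (Set.finite_singleton 0).union ?_
    refine Set.Finite.biUnion (range (n / N + 1)).finite_toSet fun h _ => ?_
    rcases eq_or_ne ((N : ℚ) * h) 0 with h0 | h0
    · convert Set.finite_empty
      ext x
      simp only [Set.mem_setOf_eq, Set.mem_empty_iff_false, iff_false]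
      rw [h0, zero_mul]
      norm_num
    · apply Set.Subsingleton.finite
      intro x hx y hy
      simp only [Set.mem_setOf_eq] at hx hy
      have : (N : ℚ) * h * x = (N : ℚ) * h * y := by linarith
      exact mul_left_cancel₀ h0 this
  have : {x : ℚ | x ≠ 0 ∧ ∀ h ∈ range (n / N + 1), 1 + (N : ℚ) * h * x ≠ 0} =
      {x : ℚ | x = 0 ∨ ∃ h ∈ range (n / N + 1), 1 + (N : ℚ) * h * x = 0}ᶜ := by
    ext x
    simp only [Set.mem_setOf_eq, Set.mem_compl_iff]
    push_neg
    rfl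
  rw [this]
  exact Set.Finite.infinite_compl hfin

/-- formal inverse of `(1 + c X)^(j+1)` -/
noncomputable def Bc (c : ℚ) (j : ℕ) : PowerSeries ℚ :=
  PowerSeries.mk fun m => (-c) ^ m * ((m + j).choose j : ℚ)

lemma Bc_step (c : ℚ) (j : ℕ) :
    (1 + PowerSeries.C (R := ℚ) c * PowerSeries.X) * Bc c (j + 1) = Bc c j := by
  ext m
  rw [add_mul, one_mul, mul_assoc, map_add, PowerSeries.coeff_C_mul]
  cases m with
  | zero =>
    simp [Bc]
  | succ m =>
    rw [PowerSeries.coeff_succ_X_mul]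
    simp only [Bc, PowerSeries.coeff_mk]
    have hP : ((m + 1 + (j + 1)).choose (j + 1) : ℚ)
        = ((m + j + 1).choose j : ℚ) + ((m + j + 1).choose (j + 1) : ℚ) := by
      have h1 : m + 1 + (j + 1) = (m + j + 1) + 1 := by omega
      have hcs := Nat.choose_succ_succ (m + j + 1) j
      rw [h1]
      exact_mod_cast hcs
    have h2 : m + (j + 1) = m + j + 1 := by omega
    have h3 : m + 1 + j = m + j + 1 := by omega
    rw [hP, h2, h3]
    ring

lemma Bc_zero_inv (c : ℚ) : (1 + PowerSeries.C (R := ℚ) c * PowerSeries.X) * Bc c 0 = 1 := by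
  ext m
  rw [add_mul, one_mul, mul_assoc, map_add, PowerSeries.coeff_C_mul]
  cases m with
  | zero => simp [Bc]
  | succ m =>
    rw [PowerSeries.coeff_succ_X_mul]
    simp only [Bc, PowerSeries.coeff_mk, Nat.add_zero, Nat.choose_zero_right, Nat.cast_one,
      mul_one, PowerSeries.coeff_one]
    rw [pow_succ]
    simp
    ring

lemma Bc_inv (c : ℚ) (j : ℕ) :
    (1 + PowerSeries.C (R := ℚ) c * PowerSeries.X) ^ (j + 1) * Bc c j = 1 := by
  induction j with
  | zero => rw [pow_one]; exact Bc_zero_inv c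
  | succ j ih => rw [pow_succ, mul_assoc, Bc_step, ih]

noncomputable def Qrp (a N n : ℕ) : Polynomial ℚ :=
  ∏ h ∈ range (n / N + 1), (1 + C ((N : ℚ) * h) * X) ^ a

lemma Qrp_split (a N n : ℕ) (j h : ℕ) (hh : h ∈ range (n / N + 1)) (hj : j ≤ a) :
    Qrp a N n = (1 + C ((N : ℚ) * h) * X) ^ j * Qrjh a N n j h := by
  rw [Qrp, ← Finset.mul_prod_erase _ _ hh, Qrjh, ← mul_assoc, ← pow_add,
    Nat.add_sub_cancel' hj]

/-- coercion of `1 + C c * X` to power series -/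
lemma coe_one_add (c : ℚ) : ((1 + C c * X : Polynomial ℚ) : PowerSeries ℚ)
    = 1 + PowerSeries.C (R := ℚ) c * PowerSeries.X := by
  push_cast
  rfl

noncomputable def Qinv (a N n : ℕ) : PowerSeries ℚ :=
  ∏ h ∈ range (n / N + 1), Bc ((N : ℚ) * h) (a - 1)

lemma Qrp_inv (a N n : ℕ) (ha : 0 < a) :
    Polynomial.coeToPowerSeries.ringHom (Qrp a N n) * Qinv a N n = 1 := by
  rw [Qrp, Qinv, map_prod, ← Finset.prod_mul_distrib]
  refine Finset.prod_eq_one fun h _ => ?_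
  rw [map_pow, Polynomial.coeToPowerSeries.ringHom_apply, coe_one_add]
  have : a = (a - 1) + 1 := by omega
  rw [this]
  exact Bc_inv _ _

noncomputable def Gser (a N n : ℕ) (p : ℕ → ℕ → ℚ) : PowerSeries ℚ :=
  ∑ h ∈ range (n / N + 1), ∑ j ∈ Finset.Icc 1 a,
    PowerSeries.C (R := ℚ) (p j h) * (PowerSeries.X ^ j * Bc ((N : ℚ) * h) (j - 1))

lemma Gser_mul_Qrp (a N n : ℕ) (p : ℕ → ℕ → ℚ) :
    Gser a N n p * Polynomial.coeToPowerSeries.ringHom (Qrp a N n)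
      = Polynomial.coeToPowerSeries.ringHom (RHSp a N n p) := by
  rw [Gser, RHSp, Finset.sum_mul, map_sum]
  refine sum_congr rfl fun h hh => ?_
  rw [Finset.sum_mul, map_sum]
  refine sum_congr rfl fun j hj => ?_
  obtain ⟨hj1, hj2⟩ := Finset.mem_Icc.mp hj
  rw [Qrp_split a N n j h hh hj2]
  simp only [Polynomial.coeToPowerSeries.ringHom_apply, Polynomial.coe_mul, Polynomial.coe_pow,
    Polynomial.coe_add, Polynomial.coe_one, Polynomial.coe_C, Polynomial.coe_X]
  have hb : Bc ((N : ℚ) * h) (j - 1) * (1 + PowerSeries.C (R := ℚ) ((N : ℚ) * h) * PowerSeries.X) ^ j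
      = 1 := by
    rw [mul_comm]
    have : j = (j - 1) + 1 := by omega
    rw [this]
    exact Bc_inv _ _
  calc PowerSeries.C (R := ℚ) (p j h) * (PowerSeries.X ^ j * Bc ((N : ℚ) * h) (j - 1)) *
        ((1 + PowerSeries.C (R := ℚ) ((N : ℚ) * h) * PowerSeries.X) ^ j *
          ((Qrjh a N n j h : Polynomial ℚ) : PowerSeries ℚ))
      = PowerSeries.C (R := ℚ) (p j h) * PowerSeries.X ^ j *
          ((Qrjh a N n j h : Polynomial ℚ) : PowerSeries ℚ) *
        (Bc ((N : ℚ) * h) (j - 1) * (1 + PowerSeries.C (R := ℚ) ((N : ℚ) * h) * PowerSeries.X) ^ j) := by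
          ring
    _ = PowerSeries.C (R := ℚ) (p j h) * PowerSeries.X ^ j *
          ((Qrjh a N n j h : Polynomial ℚ) : PowerSeries ℚ) := by rw [hb, mul_one]

/-- the test functions -/
noncomputable def ffun (i j : ℕ) (y : ℚ) : ℚ :=
  if j ≤ i then (((i - 1).choose (j - 1) : ℕ) : ℚ) * (-y) ^ (i - j) else 0

lemma KV (a r N n : ℕ) (ha : 0 < a) (hra : 2 * r * N < a) (hN : 0 < N) (hNn : N ∣ n)
    (p : ℕ → ℕ → ℚ) (hp : IsPartialFractionCoeffs a r N n p) :
    ∀ i : ℕ, i + 2 * r * n < a * (n / N + 1) →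
      ∑ h ∈ range (n / N + 1), ∑ j ∈ Finset.Icc 1 a, p j h * ffun i j ((N : ℚ) * h) = 0 := by
  intro i hi
  -- X^(D - 2rn) divides Gser
  have hdvd : (PowerSeries.X : PowerSeries ℚ) ^ (a * (n / N + 1) - 2 * r * n) ∣ Gser a N n p := by
    have h1 : Gser a N n p
        = Polynomial.coeToPowerSeries.ringHom (X ^ (a * (n / N + 1) - 2 * r * n) * Arp a r N n)
          * Qinv a N n := by
      rw [poly_id a r N n hra hN hNn p hp, ← Gser_mul_Qrp, mul_assoc, Qrp_inv a N n ha, mul_one]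
    rw [h1, map_mul, map_pow, Polynomial.coeToPowerSeries.ringHom_apply, Polynomial.coe_X]
    exact dvd_mul_of_dvd_left (dvd_mul_right _ _) _
  have hcoeff : PowerSeries.coeff i (Gser a N n p) = 0 := by
    have := (PowerSeries.X_pow_dvd_iff.mp hdvd) i (by omega)
    exact this
  rw [Gser, map_sum] at hcoeff
  rw [← hcoeff]
  refine sum_congr rfl fun h _ => ?_
  rw [map_sum]
  refine sum_congr rfl fun j hj => ?_
  obtain ⟨hj1, hj2⟩ := Finset.mem_Icc.mp hj
  rw [PowerSeries.coeff_C_mul, PowerSeries.coeff_X_pow_mul']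
  rw [ffun]
  congr 1
  split_ifs with hle
  · rw [Bc, PowerSeries.coeff_mk]
    have : i - j + (j - 1) = i - 1 := by omega
    rw [this]
    ring
  · rfl

noncomputable def Gb : ℕ → ℕ → ℕ → ℚ → ℚ
  | 0, j, j', _ => if j' = j then 1 else 0
  | k + 1, j, j', y => (y - k) * Gb k j j' y - Gb k (j + 1) j' y

noncomputable def muc : ℕ → ℕ → ℚ
  | 0, i => if i = 1 then 1 else 0
  | k + 1, i => -muc k (i - 1) - k * muc k i

lemma muc_zero_left : ∀ k, muc k 0 = 0
  | 0 => by simp [muc]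
  | k + 1 => by
    rw [muc]
    simp [muc_zero_left k]

lemma muc_big : ∀ k i, k + 1 < i → muc k i = 0
  | 0, i, hi => by
    rw [muc]
    simp only [ite_eq_right_iff]
    omega
  | k + 1, i, hi => by
    rw [muc, muc_big k (i - 1) (by omega), muc_big k i (by omega)]
    simp

lemma cc_eq (a N : ℕ) (p : ℕ → ℕ → ℚ) : ∀ k j h,
    cc a N p k j h = ∑ j' ∈ Finset.Icc 1 a, p j' h * Gb k j j' ((N : ℚ) * h)
  | 0, j, h => by
    rw [cc]
    have : ∀ j' ∈ Finset.Icc 1 a, p j' h * Gb 0 j j' ((N : ℚ) * h)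
        = if j' = j then p j' h else 0 := by
      intro j' _
      rw [Gb]
      split_ifs <;> simp
    rw [sum_congr rfl this, Finset.sum_ite_eq' (Finset.Icc 1 a) j (fun j' => p j' h)]
    simp [Finset.mem_Icc]
  | k + 1, j, h => by
    rw [cc, cc_eq a N p k j h, cc_eq a N p k (j + 1) h, Finset.mul_sum, ← sum_sub_distrib]
    refine sum_congr rfl fun j' _ => ?_
    rw [Gb]
    ring

lemma Gb_shift : ∀ k j j' (y : ℚ), Gb k (j + 1) (j' + 1) y = Gb k j j' y
  | 0, j, j', y => by
    rw [Gb, Gb]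
    simp
  | k + 1, j, j', y => by
    rw [Gb, Gb, Gb_shift k j j' y, Gb_shift k (j + 1) j' y]

lemma Gb_vanish : ∀ k j j' (y : ℚ), j' < j → Gb k j j' y = 0
  | 0, j, j', y, hlt => by
    rw [Gb, if_neg (by omega)]
  | k + 1, j, j', y, hlt => by
    rw [Gb, Gb_vanish k j j' y hlt, Gb_vanish k (j + 1) j' y (by omega)]
    ring

/-- pointwise recursion for the test functions -/
lemma ffun_rec (i j' : ℕ) (hi : 1 ≤ i) (hj' : 1 ≤ j') (y : ℚ) :
    y * ffun i j' y - (if 2 ≤ j' then ffun i (j' - 1) y else 0) = -ffun (i + 1) j' y := by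
  obtain ⟨ii, rfl⟩ : ∃ ii, i = ii + 1 := ⟨i - 1, by omega⟩
  rcases eq_or_lt_of_le hj' with h1 | h1
  · -- j' = 1
    rw [← h1, if_neg (by omega), sub_zero, ffun, ffun, if_pos hi, if_pos (by omega)]
    simp only [Nat.add_sub_cancel, Nat.sub_self, Nat.choose_zero_right, Nat.cast_one, one_mul]
    rw [pow_succ]
    ring
  · obtain ⟨jj, rfl⟩ : ∃ jj, j' = jj + 2 := ⟨j' - 2, by omega⟩
    rw [if_pos (by omega)]
    rcases le_or_gt (jj + 2) (ii + 1) with hle | hlt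
    · -- 2 ≤ j' ≤ i
      rw [ffun, ffun, ffun, if_pos hle, if_pos (by omega), if_pos (by omega)]
      simp only [Nat.add_sub_cancel]
      have e0 : jj + 2 - 1 = jj + 1 := by omega
      have e1 : ii + 1 - (jj + 2) = ii - jj - 1 := by omega
      have e2 : ii + 1 - (jj + 1) = ii - jj := by omega
      have e3 : ii + 1 + 1 - (jj + 2) = ii - jj := by omega
      have e4 : jj + 1 - 1 = jj := by omega
      rw [e0, e1, e2, e3, e4]
      have hP : ((ii + 1).choose (jj + 1) : ℚ) = (ii.choose jj : ℚ) + (ii.choose (jj + 1) : ℚ) := by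
        exact_mod_cast Nat.choose_succ_succ ii jj
      have hpow : (-y) ^ (ii - jj) = (-y) ^ (ii - jj - 1) * (-y) := by
        rw [← pow_succ]
        congr 1
        omega
      rw [hP, hpow]
      ring
    · rcases eq_or_lt_of_le (by omega : ii + 2 ≤ jj + 2) with he | hgt
      · -- j' = i + 1
        have hij : jj = ii := by omega
        subst hij
        rw [ffun, ffun, ffun, if_neg (by omega), if_pos (by omega), if_pos (by omega)]
        have e0 : jj + 2 - 1 = jj + 1 := by omega
        have e1 : jj + 1 - (jj + 1) = 0 := by omega
        have e2 : jj + 1 + 1 - (jj + 2) = 0 := by omega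
        have e3 : jj + 1 - 1 = jj := by omega
        rw [e0, e1, e2, e3]
        simp
      · rw [ffun, ffun, ffun, if_neg (by omega), if_neg (by omega), if_neg (by omega)]
        ring

lemma Gb_one_eq : ∀ k j' (y : ℚ), 1 ≤ j' →
    Gb k 1 j' y = ∑ i ∈ range (k + 1), muc k (i + 1) * ffun (i + 1) j' y := by
  intro k
  induction k with
  | zero =>
    intro j' y hj'
    rw [Gb]
    rw [Finset.sum_range_succ, Finset.sum_range_zero, zero_add]
    have hm : muc 0 (0 + 1) = 1 := by rw [muc]; simp
    rw [hm, one_mul, ffun]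
    rcases eq_or_lt_of_le hj' with h | h
    · rw [← h]
      norm_num
    · rw [if_neg (by omega), if_neg (by omega)]
  | succ k ih =>
    intro j' y hj'
    rw [Gb, ih j' y hj']
    -- rewrite Gb k 2 j'
    have h2 : Gb k 2 j' y = if 2 ≤ j' then ∑ i ∈ range (k + 1), muc k (i + 1) * ffun (i + 1) (j' - 1) y else 0 := by
      split_ifs with hj2
      · have : j' = (j' - 1) + 1 := by omega
        rw [this, show (2:ℕ) = 1 + 1 from rfl, Gb_shift]
        exact ih (j' - 1) y (by omega)
      · have : j' = 1 := by omega
        rw [this]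
        exact Gb_vanish k 2 1 y (by omega)
    rw [h2]
    have key : (y - (k:ℚ)) * ∑ i ∈ range (k + 1), muc k (i + 1) * ffun (i + 1) j' y -
        (if 2 ≤ j' then ∑ i ∈ range (k + 1), muc k (i + 1) * ffun (i + 1) (j' - 1) y else 0)
        = ∑ i ∈ range (k + 1), muc k (i + 1) *
            (y * ffun (i + 1) j' y - (if 2 ≤ j' then ffun (i + 1) (j' - 1) y else 0))
          - (k:ℚ) * ∑ i ∈ range (k + 1), muc k (i + 1) * ffun (i + 1) j' y := by
      split_ifs with hj2 <;>
        simp only [Finset.mul_sum, ← Finset.sum_sub_distrib, sub_zero] <;>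
        exact sum_congr rfl fun i _ => by ring
    rw [key]
    have hrec : ∀ i ∈ range (k + 1), muc k (i + 1) *
        (y * ffun (i + 1) j' y - (if 2 ≤ j' then ffun (i + 1) (j' - 1) y else 0))
        = muc k (i + 1) * (-ffun (i + 2) j' y) := by
      intro i _
      rw [ffun_rec (i + 1) j' (by omega) hj' y]
    rw [sum_congr rfl hrec]
    -- now RHS: expand muc (k+1)
    have hRHS : ∑ i ∈ range (k + 1 + 1), muc (k + 1) (i + 1) * ffun (i + 1) j' y
        = ∑ i ∈ range (k + 1 + 1), (-muc k i - (k:ℚ) * muc k (i + 1)) * ffun (i + 1) j' y := by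
      refine sum_congr rfl fun i _ => ?_
      rw [muc]
      simp
    rw [hRHS]
    have hsplit : ∑ i ∈ range (k + 1 + 1), (-muc k i - (k:ℚ) * muc k (i + 1)) * ffun (i + 1) j' y
        = (∑ i ∈ range (k + 1 + 1), -muc k i * ffun (i + 1) j' y)
          - (k:ℚ) * ∑ i ∈ range (k + 1 + 1), muc k (i + 1) * ffun (i + 1) j' y := by
      rw [Finset.mul_sum, ← sum_sub_distrib]
      refine sum_congr rfl fun i _ => by ring
    rw [hsplit]
    congr 1
    · -- first sums match after shifting index
      rw [Finset.sum_range_succ' (fun i => -muc k i * ffun (i + 1) j' y) (k + 1)]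
      rw [muc_zero_left, neg_zero, zero_mul, add_zero]
      refine sum_congr rfl fun i _ => by ring
    · -- second sums: drop top term
      congr 1
      conv_rhs => rw [Finset.sum_range_succ]
      rw [muc_big k (k + 1 + 1) (by omega), zero_mul, add_zero]

lemma Tk_zero (a r N n : ℕ) (p : ℕ → ℕ → ℚ)
    (hKV : ∀ i : ℕ, i + 2 * r * n < a * (n / N + 1) →
      ∑ h ∈ range (n / N + 1), ∑ j ∈ Finset.Icc 1 a, p j h * ffun i j ((N : ℚ) * h) = 0) :
    ∀ k : ℕ, k + 1 + 2 * r * n < a * (n / N + 1) →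
      ∑ h ∈ range (n / N + 1), cc a N p k 1 h = 0 := by
  intro k hk
  have h1 : ∀ h ∈ range (n / N + 1), cc a N p k 1 h
      = ∑ i ∈ range (k + 1), muc k (i + 1) *
          ∑ j ∈ Finset.Icc 1 a, p j h * ffun (i + 1) j ((N : ℚ) * h) := by
    intro h _
    rw [cc_eq]
    have h2 : ∀ j ∈ Finset.Icc 1 a, p j h * Gb k 1 j ((N : ℚ) * h)
        = ∑ i ∈ range (k + 1), muc k (i + 1) * (p j h * ffun (i + 1) j ((N : ℚ) * h)) := by
      intro j hj
      rw [Gb_one_eq k j _ (Finset.mem_Icc.mp hj).1, Finset.mul_sum]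
      refine sum_congr rfl fun i _ => by ring
    rw [sum_congr rfl h2, Finset.sum_comm]
    exact sum_congr rfl fun i _ => by rw [Finset.mul_sum]
  rw [sum_congr rfl h1, Finset.sum_comm]
  refine sum_eq_zero fun i hi => ?_
  rw [← Finset.mul_sum, hKV (i + 1) (by have := Finset.mem_range.mp hi; omega), mul_zero]

lemma Pc_eval_one (a N n : ℕ) (p : ℕ → ℕ → ℚ) (k j : ℕ) :
    (Pc a N n p k j).eval 1 = ∑ h ∈ Finset.range (n / N + 1), cc a N p k j h := by
  rw [Pc, eval_finset_sum]
  exact sum_congr rfl fun h _ => by simp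

lemma eval_at_one (g q : Polynomial ℚ) (hq : q ≠ 0) (hq1 : q.eval 1 ≠ 0) (hg1 : g.eval 1 = 0) :
    ((algebraMap (Polynomial ℚ) (RatFunc ℚ) g / algebraMap _ _ q).denom.eval 1 ≠ 0 ∧
      RatFunc.eval (RingHom.id ℚ) 1 (algebraMap (Polynomial ℚ) (RatFunc ℚ) g / algebraMap _ _ q)
        = 0) := by
  set f := algebraMap (Polynomial ℚ) (RatFunc ℚ) g / algebraMap _ _ q with hf
  have hdd : f.denom ∣ q := RatFunc.denom_div_dvd g q
  obtain ⟨w, hw⟩ := hdd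
  have hden1 : f.denom.eval 1 ≠ 0 := by
    intro h0
    apply hq1
    rw [hw, eval_mul, h0, zero_mul]
  refine ⟨hden1, ?_⟩
  -- cross multiply
  have hE : f.num * q = g * f.denom := by
    apply IsFractionRing.injective (Polynomial ℚ) (RatFunc ℚ)
    rw [map_mul, map_mul]
    have h2 : algebraMap (Polynomial ℚ) (RatFunc ℚ) f.denom ≠ 0 :=
      RatFunc.algebraMap_ne_zero (RatFunc.denom_ne_zero f)
    have h1 : algebraMap (Polynomial ℚ) (RatFunc ℚ) q ≠ 0 := RatFunc.algebraMap_ne_zero hq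
    have hnd := RatFunc.num_div_denom f
    rw [div_eq_div_iff h2 h1] at hnd
    · rw [hnd]
  have hnum1 : f.num.eval 1 = 0 := by
    have := congrArg (Polynomial.eval (1 : ℚ)) hE
    rw [eval_mul, eval_mul, hg1, zero_mul] at this
    rcases mul_eq_zero.mp this with h | h
    · exact h
    · exact absurd h hq1
  rw [RatFunc.eval]
  have hid : Polynomial.eval₂ (RingHom.id ℚ) 1 f.num = f.num.eval 1 := rfl
  rw [hid, hnum1, zero_div]

lemma one_sub_X_ne : (1 - RatFunc.X : RatFunc ℚ) ≠ 0 := by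
  have h1 : (1 - RatFunc.X : RatFunc ℚ) = algebraMap (Polynomial ℚ) (RatFunc ℚ) (1 - X) := by
    rw [map_sub, map_one, RatFunc.algebraMap_X]
  rw [h1]
  apply RatFunc.algebraMap_ne_zero
  intro h
  have h2 : (1 - X : Polynomial ℚ).coeff 1 = 0 := by rw [h]; simp
  rw [coeff_sub, coeff_one, coeff_X_one] at h2
  norm_num at h2

lemma algebraMap_X_sub_one :
    algebraMap (Polynomial ℚ) (RatFunc ℚ) (X - C 1) = -(1 - RatFunc.X) := by
  rw [map_sub, RatFunc.algebraMap_X, Polynomial.C_1, map_one]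
  ring

lemma nice_P_term_U (a N n : ℕ) (p : ℕ → ℕ → ℚ) (m : ℕ)
    (h0 : (Pc a N n p m 1).eval 1 = 0) :
    Nice ((1 / (1 - RatFunc.X)) * PPk a N n p m 1) := by
  obtain ⟨w, hw⟩ : (X - C 1) ∣ Pc a N n p m 1 := dvd_iff_isRoot.mpr h0
  refine ⟨-w, X ^ m, by simp, ?_⟩
  rw [PPk_eq, hw, map_mul, algebraMap_X_sub_one]
  calc 1 / (1 - RatFunc.X) *
        (-(1 - RatFunc.X) * algebraMap (Polynomial ℚ) (RatFunc ℚ) w / RatFunc.X ^ m)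
      = ((1 - RatFunc.X)⁻¹ * (1 - RatFunc.X)) *
        (-(algebraMap (Polynomial ℚ) (RatFunc ℚ) w) / RatFunc.X ^ m) := by
        rw [one_div]; ring
    _ = -(algebraMap (Polynomial ℚ) (RatFunc ℚ) w) / RatFunc.X ^ m := by
        rw [inv_mul_cancel₀ one_sub_X_ne, one_mul]
    _ = algebraMap (Polynomial ℚ) (RatFunc ℚ) (-w)
          / algebraMap (Polynomial ℚ) (RatFunc ℚ) (X ^ m) := by
        rw [map_neg, map_pow, RatFunc.algebraMap_X]

lemma nice_P_term_V (a N n : ℕ) (p : ℕ → ℕ → ℚ) (m : ℕ)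
    (h0 : (Pc a N n p m 1).eval 1 = 0) :
    Nice ((1 / (RatFunc.X * (1 - RatFunc.X))) * PPk a N n p m 1) := by
  obtain ⟨w, hw⟩ : (X - C 1) ∣ Pc a N n p m 1 := dvd_iff_isRoot.mpr h0
  refine ⟨-w, X ^ (m + 1), by simp, ?_⟩
  rw [PPk_eq, hw, map_mul, algebraMap_X_sub_one]
  calc 1 / (RatFunc.X * (1 - RatFunc.X)) *
        (-(1 - RatFunc.X) * algebraMap (Polynomial ℚ) (RatFunc ℚ) w / RatFunc.X ^ m)
      = ((1 - RatFunc.X)⁻¹ * (1 - RatFunc.X)) *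
        (-(algebraMap (Polynomial ℚ) (RatFunc ℚ) w) * (RatFunc.X ^ m * RatFunc.X)⁻¹) := by
        rw [one_div, mul_inv, mul_inv]; ring
    _ = -(algebraMap (Polynomial ℚ) (RatFunc ℚ) w) * (RatFunc.X ^ (m + 1))⁻¹ := by
        rw [inv_mul_cancel₀ one_sub_X_ne, one_mul, pow_succ]
    _ = algebraMap (Polynomial ℚ) (RatFunc ℚ) (-w)
          / algebraMap (Polynomial ℚ) (RatFunc ℚ) (X ^ (m + 1)) := by
        rw [map_neg, map_pow, RatFunc.algebraMap_X, div_eq_mul_inv]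

end Aux

/-- Let `a, r, N, n` be positive integers with `2rN < a` and `N ∣ n`, and set
`d₀ = a(n/N + 1) - 2rn`. Then for every `1 ≤ k ≤ d₀ - 1`: `P_{k,1}` is defined at `z = 1`
with `P_{k,1}(1) = 0`, and the rational functions `U_k`, `V_k` have no pole at `z = 1`. -/
theorem no_pole_at_one_and_first_coefficient_vanishes
    (a r N n : ℕ) (ha : 0 < a) (hr : 0 < r) (hN : 0 < N) (hn : 0 < n)
    (hra : 2 * r * N < a) (hNn : N ∣ n)
    (p : ℕ → ℕ → ℚ) (hp : IsPartialFractionCoeffs a r N n p) :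
    ∀ k : ℕ, 1 ≤ k → k + 1 ≤ a * (n / N + 1) - 2 * r * n →
      (Polynomial.eval (1 : ℚ) (PPk a N n p (k - 1) 1).denom ≠ 0 ∧
        RatFunc.eval (RingHom.id ℚ) 1 (PPk a N n p (k - 1) 1) = 0) ∧
      Polynomial.eval (1 : ℚ) (UkF a N n p (k - 1)).denom ≠ 0 ∧
      Polynomial.eval (1 : ℚ) (VkF a N n p (k - 1)).denom ≠ 0 := by
  intro k hk1 hk2
  have hD2 : 2 * r * n ≤ a * (n / N + 1) := by
    calc 2 * r * n = 2 * r * (N * (n / N)) := by rw [Nat.mul_div_cancel' hNn]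
    _ = 2 * r * N * (n / N) := by ring
    _ ≤ a * (n / N) := Nat.mul_le_mul_right _ (le_of_lt hra)
    _ ≤ a * (n / N + 1) := Nat.mul_le_mul_left _ (Nat.le_succ _)
  have hKV := KV a r N n ha hra hN hNn p hp
  have hT : ∀ m : ℕ, m + 1 + 2 * r * n < a * (n / N + 1) →
      (Pc a N n p m 1).eval 1 = 0 := by
    intro m hm
    rw [Pc_eval_one]
    exact Tk_zero a r N n p hKV m hm
  obtain ⟨k', rfl⟩ : ∃ k', k = k' + 1 := ⟨k - 1, by omega⟩
  simp only [Nat.add_sub_cancel]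
  have hcond : k' + 1 + 2 * r * n < a * (n / N + 1) := by omega
  refine ⟨?_, ?_, ?_⟩
  · rw [PPk_eq]
    have hXmap : (RatFunc.X : RatFunc ℚ) ^ k'
        = algebraMap (Polynomial ℚ) (RatFunc ℚ) (Polynomial.X ^ k') := by
      rw [map_pow, RatFunc.algebraMap_X]
    rw [hXmap]
    exact eval_at_one _ _ (pow_ne_zero _ Polynomial.X_ne_zero) (by simp) (hT k' hcond)
  · have hU : ∀ m : ℕ, m + 1 + 2 * r * n ≤ a * (n / N + 1) → Nice (UkF a N n p m) := by
      intro m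
      induction m with
      | zero => intro _; exact nice_algebraMap _
      | succ m ih =>
        intro hm
        rw [UkF]
        exact (Nice.ratDeriv (ih (by omega))).sub (nice_P_term_U a N n p m (hT m (by omega)))
    exact Nice.denom_eval_ne _ (hU k' (by omega))
  · have hV : ∀ m : ℕ, m + 1 + 2 * r * n ≤ a * (n / N + 1) → Nice (VkF a N n p m) := by
      intro m
      induction m with
      | zero => intro _; exact nice_algebraMap _
      | succ m ih =>
        intro hm
        rw [VkF]
        exact (Nice.ratDeriv (ih (by omega))).add (nice_P_term_V a N n p m (hT m (by omega)))
    exact Nice.denom_eval_ne _ (hV k' (by omega))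
end

section
/- Let e be a positive integer divisible by 4 and let χ be a primitive Dirichlet character modulo e. Then χ(n + e/2) = −χ(n) for every integer n. In particular χ(e/2 + 1) = −1. -/
/-- Let `e` be a positive integer divisible by `4` and `χ` a primitive Dirichlet
character modulo `e`. Then `χ(n + e/2) = -χ(n)` for every integer `n`; in particular
`χ(e/2 + 1) = -1`. -/
theorem primitive_character_half_period_sign
    (e : ℕ) (he : 0 < e) (he4 : 4 ∣ e)
    (χ : DirichletCharacter ℂ e) (hχ : χ.IsPrimitive) :
    (∀ n : ℤ, χ (((n + e / 2 : ℤ) : ZMod e)) = -χ ((n : ZMod e))) ∧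
      χ (((e / 2 + 1 : ℕ) : ZMod e)) = -1 := by
  haveI : NeZero e := ⟨he.ne'⟩
  obtain ⟨m, rfl⟩ := he4
  have hm : 0 < m := by omega
  set g : ZMod (4 * m) := ((2 * m : ℕ) : ZMod (4 * m)) with hg
  have hgg : g * g = 0 := by
    rw [hg, ← Nat.cast_mul, ZMod.natCast_eq_zero_iff]
    exact ⟨m, by ring⟩
  have hg2 : g + g = 0 := by
    rw [hg, ← Nat.cast_add, ZMod.natCast_eq_zero_iff]
    exact ⟨1, by ring⟩
  have hu : (1 + g) * (1 + g) = 1 := by linear_combination hgg + hg2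
  have hunit : IsUnit (1 + g) := IsUnit.of_mul_eq_one _ hu
  -- χ (1 + g) squares to 1
  have hsq : χ (1 + g) * χ (1 + g) = 1 := by
    rw [← map_mul, hu, map_one]
  -- χ (1 + g) ≠ 1
  have hne : χ (1 + g) ≠ 1 := by
    intro h1
    have hd : 2 * m ∣ 4 * m := ⟨2, by ring⟩
    have ft : χ.FactorsThrough (2 * m) := by
      rw [DirichletCharacter.factorsThrough_iff_ker_unitsMap hd]
      intro v hv
      have hv' : (ZMod.castHom hd (ZMod (2 * m)) (v : ZMod (4 * m))) = 1 := by
        have := congrArg (Units.val) hv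
        simpa [ZMod.unitsMap_def] using this
      set x : ZMod (4 * m) := (v : ZMod (4 * m)) with hx
      have h0 : (ZMod.castHom hd (ZMod (2 * m)) (x - 1)) = 0 := by
        rw [map_sub, hv', map_one, sub_self]
      have hval : (((x - 1).val : ℕ) : ZMod (2 * m)) = 0 := by
        rwa [ZMod.natCast_val, ← ZMod.castHom_apply (h := hd)]
      have hdvd : 2 * m ∣ (x - 1).val := by
        rwa [ZMod.natCast_eq_zero_iff] at hval
      have hlt : (x - 1).val < 4 * m := ZMod.val_lt _
      have hcase : (x - 1).val = 0 ∨ (x - 1).val = 2 * m := by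
        obtain ⟨c, hc⟩ := hdvd
        have hc2 : c < 2 := by nlinarith
        interval_cases c
        · left; omega
        · right; omega
      have hxval : x = 1 ∨ x = 1 + g := by
        have hrec : ((x - 1).val : ZMod (4 * m)) = x - 1 := ZMod.natCast_zmod_val _
        rcases hcase with h | h
        · left; rw [h] at hrec; simp at hrec; linear_combination -hrec
        · right; rw [h] at hrec; rw [hg, hrec]; ring
      have hχx : χ x = 1 := by
        rcases hxval with h | h
        · rw [h, map_one]
        · rw [h, h1]
      rw [MonoidHom.mem_ker]
      ext
      rw [MulChar.coe_toUnitHom]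
      simpa using hχx
    have hle : χ.conductor ≤ 2 * m := Nat.sInf_le ft
    rw [DirichletCharacter.IsPrimitive] at hχ
    omega
  have hχg : χ (1 + g) = -1 := by
    rcases mul_self_eq_one_iff.mp hsq with h | h
    · exact absurd h hne
    · exact h
  -- 2 is not a unit mod 4m
  have h2 : ¬ IsUnit ((2 : ℕ) : ZMod (4 * m)) := by
    rw [ZMod.isUnit_iff_coprime]
    intro hc
    have : (2:ℕ) ∣ Nat.gcd 2 (4 * m) := Nat.dvd_gcd dvd_rfl ⟨2 * m, by ring⟩
    rw [hc] at this
    omega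
  have main : ∀ n : ℤ, χ (((n + (4 * m : ℕ) / 2 : ℤ) : ZMod (4 * m))) = -χ ((n : ZMod (4 * m))) := by
    intro n
    have hhalf : ((4 * m : ℕ) : ℤ) / 2 = 2 * m := by push_cast; omega
    rw [hhalf]
    rcases Int.even_or_odd n with ⟨k, hk⟩ | ⟨k, hk⟩
    · -- even: both sides are zero
      have hn0 : χ ((n : ZMod (4 * m))) = 0 := by
        apply χ.map_nonunit
        intro h
        apply h2
        have : ((n : ZMod (4 * m))) = ((2 : ℕ) : ZMod (4 * m)) * (k : ZMod (4 * m)) := by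
          rw [hk]; push_cast; ring
        rw [this] at h
        exact isUnit_of_mul_isUnit_left h
      have hn1 : χ (((n + 2 * m : ℤ) : ZMod (4 * m))) = 0 := by
        apply χ.map_nonunit
        intro h
        apply h2
        have : (((n + 2 * m : ℤ) : ZMod (4 * m))) =
            ((2 : ℕ) : ZMod (4 * m)) * ((k + m : ℤ) : ZMod (4 * m)) := by
          rw [hk]; push_cast; ring
        rw [this] at h
        exact isUnit_of_mul_isUnit_left h
      rw [hn0, hn1, neg_zero]
    · -- odd: n + 2m ≡ n * (1 + 2m) mod 4m
      have key : (((n + 2 * m : ℤ) : ZMod (4 * m))) = (n : ZMod (4 * m)) * (1 + g) := by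
        have : ((n * (1 + 2 * m) : ℤ) : ZMod (4 * m)) = (((n + 2 * m : ℤ)) : ZMod (4 * m)) := by
          rw [ZMod.intCast_eq_intCast_iff_dvd_sub]
          push_cast
          exact ⟨-k, by rw [hk]; ring⟩
        rw [← this, hg]
        push_cast
        ring
      rw [key, map_mul, hχg]
      ring
  constructor
  · exact main
  · have h1 := main 1
    have hhalf2 : (4 * m) / 2 = 2 * m := by omega
    simp only [Int.cast_one, map_one] at h1
    have hcast : (((4 * m) / 2 + 1 : ℕ) : ZMod (4 * m)) = ((1 + ((4 * m : ℕ) : ℤ) / 2 : ℤ) : ZMod (4 * m)) := by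
      rw [hhalf2, show (1 + ((4 * m : ℕ) : ℤ) / 2 : ℤ) = ((2 * m + 1 : ℕ) : ℤ) by push_cast; omega,
        Int.cast_natCast]
    rw [hcast]
    exact h1
end
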